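/- arXiv:1901.06602 — 4 statements merged into one kernel-verified Lean document; each statement's English description precedes it below -/
import Mathlib

section
/- Let m, n be positive integers, d = m + n. For all integers 1 ≤ k ≤ d-1, f_{m,n}(k) ≤ δ_{m,n}, where f_{m,n}(k) = mn - k(d-k)mn/d² - {km/d}{kn/d} and δ_{m,n} = mn(1 - 1/d). -/
/-- `f_{m,n}(k) = mn - k(d-k)mn/d² - {km/d}·{kn/d}` where `d = m+n` and `{x}` is the
fractional part. -/
noncomputable def fmn (m n : ℕ) (k : ℕ) : ℝ :=
  (m * n : ℝ) - (k : ℝ) * ((m + n : ℝ) - k) * (m * n : ℝ) / ((m + n : ℝ)) ^ 2 -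
    Int.fract ((k * m : ℝ) / (m + n)) * Int.fract ((k * n : ℝ) / (m + n))

/-- For all integers `1 ≤ k ≤ d-1`, `f_{m,n}(k) ≤ δ_{m,n} = mn(1 - 1/d)`. -/
theorem fmn_le_delta (m n : ℕ) (hm : 0 < m) (hn : 0 < n) (k : ℕ)
    (hk1 : 1 ≤ k) (hk2 : k ≤ m + n - 1) :
    fmn m n k ≤ (m * n : ℝ) * (1 - 1 / (m + n)) := by
  have hd2 : 2 ≤ m + n := by omega
  have hdR : (0:ℝ) < (m:ℝ) + n := by positivity
  have hfr : ∀ a : ℕ, a < m + n →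
      Int.fract ((a:ℝ) / ((m:ℝ) + n)) = (a:ℝ) / ((m:ℝ) + n) := by
    intro a ha
    refine Int.fract_eq_self.2 ⟨by positivity, ?_⟩
    rw [div_lt_one hdR]
    exact_mod_cast ha
  rcases eq_or_lt_of_le hk1 with h1 | h2
  · -- k = 1
    subst h1
    apply le_of_eq
    unfold fmn
    simp only [Nat.cast_one, one_mul]
    rw [hfr m (by omega), hfr n (by omega)]
    field_simp
    ring
  · rcases eq_or_lt_of_le hk2 with hke | hklt
    · -- k = m + n - 1
      have hkR : (k:ℝ) = (m:ℝ) + n - 1 := by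
        have : k + 1 = m + n := by omega
        have := congrArg (fun x : ℕ => (x : ℝ)) this
        push_cast at this
        linarith
      apply le_of_eq
      unfold fmn
      have e1 : ((k:ℝ) * m) / ((m:ℝ) + n) =
          (((m:ℤ) - 1 : ℤ) : ℝ) + (n:ℝ) / ((m:ℝ) + n) := by
        push_cast
        rw [hkR]
        field_simp
        ring
      have e2 : ((k:ℝ) * n) / ((m:ℝ) + n) =
          (((n:ℤ) - 1 : ℤ) : ℝ) + (m:ℝ) / ((m:ℝ) + n) := by
        push_cast
        rw [hkR]
        field_simp
        ring
      rw [e1, e2, Int.fract_intCast_add, Int.fract_intCast_add,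
        hfr n (by omega), hfr m (by omega), hkR]
      field_simp
      ring
    · -- 2 ≤ k ≤ m + n - 2
      have hk2R : (2:ℝ) ≤ (k:ℝ) := by exact_mod_cast h2
      have hkubR : (k:ℝ) ≤ (m:ℝ) + n - 2 := by
        have : k + 2 ≤ m + n := by omega
        have := congrArg (fun x : ℕ => (x : ℝ)) (Nat.add_sub_cancel' this).symm
        have h' : (k:ℝ) + 2 ≤ (m:ℝ) + n := by exact_mod_cast ‹k + 2 ≤ m + n›
        linarith
      have key : (m:ℝ) + n ≤ (k:ℝ) * (((m:ℝ) + n) - k) := by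
        nlinarith [mul_nonneg (sub_nonneg.2 hk2R) (by linarith : (0:ℝ) ≤ (m:ℝ) + n - 2 - k)]
      have hmnR : (0:ℝ) ≤ (m:ℝ) * n := by positivity
      have hdiv : (m:ℝ) * n / ((m:ℝ) + n) ≤
          (k:ℝ) * (((m:ℝ) + n) - k) * ((m:ℝ) * n) / ((m:ℝ) + n) ^ 2 := by
        rw [div_le_div_iff₀ hdR (by positivity)]
        nlinarith [mul_le_mul_of_nonneg_right key (mul_nonneg hmnR hdR.le)]
      have hF : 0 ≤ Int.fract (((k:ℝ) * m) / ((m:ℝ) + n)) *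
          Int.fract (((k:ℝ) * n) / ((m:ℝ) + n)) :=
        mul_nonneg (Int.fract_nonneg _) (Int.fract_nonneg _)
      have hrhs : (m:ℝ) * n * (1 - 1 / ((m:ℝ) + n)) =
          (m:ℝ) * n - (m:ℝ) * n / ((m:ℝ) + n) := by
        field_simp
      unfold fmn
      push_cast
      push_cast at hrhs
      linarith
end

section
/- Let Λ ⊂ ℝᵈ be a full-rank lattice, and let V_q be the span of the first q vectors of a Minkowski-reduced basis of Λ as in the previous lemma. Then for every Λ-rational q-dimensional subspace V'_q ≠ V_q, the covolume satisfies log‖V'_q‖ ≥ Σ_{i=1}^{q-1} log λᵢ(Λ) + log λ_{q+1}(Λ) - O(1), with implied constant depending only on d. -/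
open scoped RealInnerProductSpace

/-- The `i`-th successive minimum of a set `Λ ⊂ ℝᵈ`. -/
noncomputable def succMin {d : ℕ} (Λ : Set (EuclideanSpace ℝ (Fin d))) (i : ℕ) : ℝ :=
  sInf {l : ℝ | ∃ v : Fin i → EuclideanSpace ℝ (Fin d),
    (∀ j, v j ∈ Λ) ∧ (∀ j, ‖v j‖ ≤ l) ∧ LinearIndependent ℝ v}

/-- Covolume of the lattice spanned by `v` (square root of the Gram determinant). -/
noncomputable def gramCovol {d q : ℕ} (v : Fin q → EuclideanSpace ℝ (Fin d)) : ℝ :=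
  Real.sqrt (Matrix.det (Matrix.of fun i j => (⟪v i, v j⟫ : ℝ)))

namespace RSCLB

open Submodule Finset

variable {d : ℕ}

local notation "E" => EuclideanSpace ℝ (Fin d)

/-- the set whose inf is `succMin` -/
def smSet (Λ : Set E) (k : ℕ) : Set ℝ :=
  {l : ℝ | ∃ v : Fin k → E, (∀ j, v j ∈ Λ) ∧ (∀ j, ‖v j‖ ≤ l) ∧ LinearIndependent ℝ v}

lemma succMin_eq (Λ : Set E) (k : ℕ) : succMin Λ k = sInf (smSet Λ k) := rfl

lemma smSet_bddBelow (Λ : Set E) {k : ℕ} (hk : 0 < k) : BddBelow (smSet Λ k) := by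
  refine ⟨0, fun l hl => ?_⟩
  obtain ⟨v, -, h2, -⟩ := hl
  exact le_trans (norm_nonneg (v ⟨0, hk⟩)) (h2 ⟨0, hk⟩)

lemma succMin_le_of_family {Λ : Set E} {k : ℕ} (hk : 0 < k) {l : ℝ} (v : Fin k → E)
    (h1 : ∀ j, v j ∈ Λ) (h2 : ∀ j, ‖v j‖ ≤ l) (h3 : LinearIndependent ℝ v) :
    succMin Λ k ≤ l :=
  csInf_le (smSet_bddBelow Λ hk) ⟨v, h1, h2, h3⟩

lemma le_succMin {Λ : Set E} {k : ℕ} {c : ℝ} (hne : (smSet Λ k).Nonempty)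
    (h : ∀ l ∈ smSet Λ k, c ≤ l) : c ≤ succMin Λ k :=
  le_csInf hne h

lemma succMin_le_succMin {Λ M : Set E} (hsub : M ⊆ Λ) {k m : ℕ} (hk : 0 < k) (hkm : k ≤ m)
    (hne : (smSet M m).Nonempty) : succMin Λ k ≤ succMin M m := by
  refine csInf_le_csInf (smSet_bddBelow Λ hk) hne ?_
  rintro l ⟨v, h1, h2, h3⟩
  exact ⟨v ∘ Fin.castLE hkm, fun j => hsub (h1 _), fun j => h2 _,
    h3.comp (Fin.castLE hkm) (Fin.castLE_injective hkm)⟩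

lemma smSet_nonempty_of_family {Λ : Set E} {k : ℕ} (v : Fin k → E)
    (h1 : ∀ j, v j ∈ Λ) (h3 : LinearIndependent ℝ v) : (smSet Λ k).Nonempty :=
  ⟨∑ j, ‖v j‖, v, h1, fun j =>
    Finset.single_le_sum (f := fun j => ‖v j‖) (fun _ _ => norm_nonneg _) (Finset.mem_univ j), h3⟩

lemma exists_shortest {n : ℕ} (hn : 0 < n) (v : Fin n → E) (hv : LinearIndependent ℝ v) :
    ∃ w ∈ span ℤ (Set.range v), w ≠ 0 ∧
      ∀ x ∈ span ℤ (Set.range v), x ≠ 0 → ‖w‖ ≤ ‖x‖ := by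
  classical
  -- the ℝ-linear combination map
  set Φ : (Fin n → ℝ) →ₗ[ℝ] E := Fintype.linearCombination ℝ v with hΦdef
  have hΦ : ∀ c : Fin n → ℝ, Φ c = ∑ i, c i • v i := fun c => by
    simp [hΦdef, Fintype.linearCombination_apply]
  have hinj : Function.Injective Φ := by
    rw [← LinearMap.ker_eq_bot]
    rw [Submodule.eq_bot_iff]
    intro c hc
    rw [LinearMap.mem_ker, hΦ] at hc
    funext i
    exact Fintype.linearIndependent_iff.mp hv c hc i
  -- continuous left inverse
  let e : (Fin n → ℝ) ≃ₗ[ℝ] LinearMap.range Φ := LinearEquiv.ofInjective Φ hinj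
  let τ : (LinearMap.range Φ) →L[ℝ] (Fin n → ℝ) :=
    LinearMap.toContinuousLinearMap (e.symm : LinearMap.range Φ →ₗ[ℝ] (Fin n → ℝ))
  have key : ∀ c : Fin n → ℝ, ‖c‖ ≤ ‖τ‖ * ‖Φ c‖ := by
    intro c
    have h1 : τ ⟨Φ c, LinearMap.mem_range_self Φ c⟩ = c := by
      have : (⟨Φ c, LinearMap.mem_range_self Φ c⟩ : LinearMap.range Φ) = e c := rfl
      simp [τ, this]
    calc ‖c‖ = ‖τ ⟨Φ c, LinearMap.mem_range_self Φ c⟩‖ := by rw [h1]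
    _ ≤ ‖τ‖ * ‖(⟨Φ c, LinearMap.mem_range_self Φ c⟩ : LinearMap.range Φ)‖ := τ.le_opNorm _
    _ = ‖τ‖ * ‖Φ c‖ := rfl
  -- members of the span are integer combinations
  have hmem : ∀ x ∈ span ℤ (Set.range v), ∃ c : Fin n → ℤ, Φ (fun i => (c i : ℝ)) = x := by
    intro x hx
    obtain ⟨c, hc⟩ := (mem_span_range_iff_exists_fun ℤ).mp hx
    refine ⟨c, ?_⟩
    rw [hΦ]
    rw [← hc]
    exact Finset.sum_congr rfl fun i _ => Int.cast_smul_eq_zsmul ℝ (c i) (v i)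
  -- finiteness of lattice points in balls
  have hfin : ∀ R : ℝ, Set.Finite {x : E | x ∈ span ℤ (Set.range v) ∧ ‖x‖ ≤ R} := by
    intro R
    set N : ℤ := ⌈‖τ‖ * R⌉ with hN
    have : {x : E | x ∈ span ℤ (Set.range v) ∧ ‖x‖ ≤ R} ⊆
        (fun c : Fin n → ℤ => Φ (fun i => (c i : ℝ))) ''
          (Set.pi Set.univ fun _ : Fin n => (Set.Icc (-N) N)) := by
      rintro x ⟨hx, hxR⟩
      obtain ⟨c, hc⟩ := hmem x hx
      refine ⟨c, ?_, hc⟩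
      intro i _
      have h1 : |(c i : ℝ)| ≤ ‖τ‖ * R := by
        calc |(c i : ℝ)| = ‖(fun i => (c i : ℝ)) i‖ := rfl
        _ ≤ ‖fun i => (c i : ℝ)‖ := norm_le_pi_norm (fun i => (c i : ℝ)) i
        _ ≤ ‖τ‖ * ‖Φ fun i => (c i : ℝ)‖ := key _
        _ = ‖τ‖ * ‖x‖ := by rw [hc]
        _ ≤ ‖τ‖ * R := by
            have := norm_nonneg (τ)
            nlinarith [norm_nonneg x]
      have h2 : |(c i : ℝ)| ≤ (N : ℝ) := h1.trans (Int.le_ceil _)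
      rw [abs_le] at h2
      constructor
      · exact_mod_cast h2.1
      · exact_mod_cast h2.2
    refine Set.Finite.subset (Set.Finite.image _ ?_) this
    exact Set.Finite.pi fun _ => Set.finite_Icc _ _
  -- the candidate set
  have hv0mem : v ⟨0, hn⟩ ∈ span ℤ (Set.range v) := subset_span (Set.mem_range_self _)
  have hv0ne : v ⟨0, hn⟩ ≠ 0 := hv.ne_zero _
  set R₀ : ℝ := ‖v ⟨0, hn⟩‖ with hR₀
  set T : Set E := {x : E | (x ∈ span ℤ (Set.range v) ∧ ‖x‖ ≤ R₀) ∧ x ≠ 0} with hT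
  have hTfin : T.Finite := Set.Finite.subset (hfin R₀) (fun x hx => hx.1)
  have hTne : T.Nonempty := ⟨v ⟨0, hn⟩, ⟨hv0mem, le_refl _⟩, hv0ne⟩
  obtain ⟨w, hwT, hwmin⟩ := Set.exists_min_image T (fun x => ‖x‖) hTfin hTne
  refine ⟨w, hwT.1.1, hwT.2, ?_⟩
  intro x hx hx0
  by_cases hcase : ‖x‖ ≤ R₀
  · exact hwmin x ⟨⟨hx, hcase⟩, hx0⟩
  · calc ‖w‖ ≤ R₀ := hwT.1.2
    _ ≤ ‖x‖ := (not_le.mp hcase).le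

lemma gram_transform {q m : ℕ} (v : Fin m → E) (A : Matrix (Fin q) (Fin m) ℝ) :
    (Matrix.of fun i j => (⟪∑ k, A i k • v k, ∑ k, A j k • v k⟫ : ℝ)) =
      A * (Matrix.of fun i j => (⟪v i, v j⟫ : ℝ)) * A.transpose := by
  ext i j
  simp only [Matrix.of_apply, Matrix.mul_apply, Matrix.transpose_apply]
  have L : (⟪∑ k, A i k • v k, ∑ k, A j k • v k⟫ : ℝ)
      = ∑ k, ∑ l, A i k * A j l * (⟪v k, v l⟫ : ℝ) := by
    rw [sum_inner]
    refine Finset.sum_congr rfl fun k _ => ?_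
    rw [real_inner_smul_left, inner_sum, Finset.mul_sum]
    refine Finset.sum_congr rfl fun l _ => ?_
    rw [real_inner_smul_right]; ring
  rw [L]
  rw [Finset.sum_comm]
  refine Finset.sum_congr rfl fun l _ => ?_
  rw [Finset.sum_mul]
  refine Finset.sum_congr rfl fun k _ => by ring

lemma det_gram_cons_orth {q : ℕ} (w : E) (z : Fin q → E) (h : ∀ j, ⟪w, z j⟫ = 0) :
    (Matrix.of fun i j => (⟪(Fin.cons w z : Fin (q+1) → E) i,
        (Fin.cons w z : Fin (q+1) → E) j⟫ : ℝ)).det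
      = ‖w‖^2 * (Matrix.of fun i j => (⟪z i, z j⟫ : ℝ)).det := by
  rw [Matrix.det_succ_row_zero]
  rw [Finset.sum_eq_single 0]
  · simp only [Matrix.of_apply, Fin.cons_zero]
    rw [real_inner_self_eq_norm_sq]
    have hsub : ((Matrix.of fun i j => (⟪(Fin.cons w z : Fin (q+1) → E) i,
        (Fin.cons w z : Fin (q+1) → E) j⟫ : ℝ)).submatrix Fin.succ (Fin.succAbove 0)) =
        (Matrix.of fun i j => (⟪z i, z j⟫ : ℝ)) := by
      ext i j
      simp [Fin.succAbove_zero]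
    rw [hsub]
    simp
  · intro j _ hj
    obtain ⟨j', rfl⟩ := Fin.exists_succ_eq.mpr hj
    simp only [Matrix.of_apply, Fin.cons_zero, Fin.cons_succ, h j']
    ring
  · simp

noncomputable def pr (w : E) : E →ₗ[ℝ] E where
  toFun := fun x => x - (⟪w, x⟫ / ‖w‖^2) • w
  map_add' := by
    intro a b
    rw [inner_add_right]
    rw [add_div, add_smul]
    abel
  map_smul' := by
    intro c x
    rw [real_inner_smul_right]
    simp only [RingHom.id_apply]
    rw [smul_sub, mul_div_assoc, mul_smul]

lemma pr_apply (w x : E) : pr w x = x - (⟪w, x⟫ / ‖w‖^2) • w := rfl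

lemma inner_pr (w x : E) (hw : w ≠ 0) : ⟪w, pr w x⟫ = 0 := by
  rw [pr_apply, inner_sub_right, real_inner_smul_right, real_inner_self_eq_norm_sq]
  have h : ‖w‖ ^ 2 ≠ 0 := pow_ne_zero 2 (norm_ne_zero_iff.mpr hw)
  field_simp
  ring

lemma pr_w (w : E) (hw : w ≠ 0) : pr w w = 0 := by
  rw [pr_apply, real_inner_self_eq_norm_sq]
  have h : ‖w‖ ^ 2 ≠ 0 := pow_ne_zero 2 (norm_ne_zero_iff.mpr hw)
  rw [div_self h, one_smul, sub_self]

lemma pr_of_orth (w x : E) (h : ⟪w, x⟫ = 0) : pr w x = x := by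
  rw [pr_apply, h, zero_div, zero_smul, sub_zero]

lemma pr_norm_sq (w x : E) (hw : w ≠ 0) :
    ‖x‖^2 = ‖pr w x‖^2 + (⟪w, x⟫ / ‖w‖^2)^2 * ‖w‖^2 := by
  have hx : x = pr w x + (⟪w, x⟫ / ‖w‖^2) • w := by rw [pr_apply]; abel
  have horth : (⟪pr w x, (⟪w, x⟫ / ‖w‖^2) • w⟫ : ℝ) = 0 := by
    rw [real_inner_smul_right]
    have h0 : (⟪(pr w) x, w⟫ : ℝ) = 0 := by rw [real_inner_comm]; exact inner_pr w x hw
    rw [h0, mul_zero]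
  calc ‖x‖^2 = ‖pr w x + (⟪w, x⟫ / ‖w‖^2) • w‖^2 := by rw [← hx]
  _ = ‖pr w x‖^2 + 2 * ⟪pr w x, (⟪w, x⟫ / ‖w‖^2) • w⟫ + ‖(⟪w, x⟫ / ‖w‖^2) • w‖^2 :=
      norm_add_sq_real _ _
  _ = ‖pr w x‖^2 + (⟪w, x⟫ / ‖w‖^2)^2 * ‖w‖^2 := by
      rw [horth, norm_smul]
      rw [mul_pow, Real.norm_eq_abs, sq_abs]
      ring

lemma exists_good_basis {q : ℕ} (v : Fin (q+1) → E) (hv : LinearIndependent ℝ v)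
    (w₀ : E) (hw₀ : w₀ ∈ span ℤ (Set.range v)) (hw0 : w₀ ≠ 0) :
    ∃ u : Fin (q+1) → E,
      span ℤ (Set.range u) = span ℤ (Set.range v) ∧ LinearIndependent ℝ u ∧
      (Matrix.of fun i j => (⟪u i, u j⟫ : ℝ)).det =
        (Matrix.of fun i j => (⟪v i, v j⟫ : ℝ)).det ∧
      ∃ c : ℤ, w₀ = c • u 0 := by
  classical
  set std : Module.Basis (Fin (q+1)) ℤ (Fin (q+1) → ℤ) := Pi.basisFun ℤ (Fin (q+1)) with hstd
  set ΦZ : (Fin (q+1) → ℤ) →ₗ[ℤ] E := Fintype.linearCombination ℤ v with hΦZ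
  have hΦZ_apply : ∀ c : Fin (q+1) → ℤ, ΦZ c = ∑ i, c i • v i := fun c => by
    simp [hΦZ, Fintype.linearCombination_apply]
  have hrange : LinearMap.range ΦZ = span ℤ (Set.range v) := by
    rw [hΦZ]; exact Fintype.range_linearCombination ℤ v
  obtain ⟨c₀, hc₀⟩ := (mem_span_range_iff_exists_fun ℤ).mp hw₀
  have hΦc₀ : ΦZ c₀ = w₀ := by rw [hΦZ_apply]; exact hc₀
  have hc₀ne : c₀ ≠ 0 := by
    rintro rfl
    apply hw0
    rw [← hΦc₀, hΦZ_apply]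
    simp
  set N : Submodule ℤ (Fin (q+1) → ℤ) := span ℤ {c₀} with hN
  obtain ⟨n, snf⟩ := N.smithNormalForm std
  have hc₀N : c₀ ∈ N := subset_span rfl
  have hn1 : n = 1 := by
    have hg : LinearIndependent ℤ (fun _ : Fin 1 => (⟨c₀, hc₀N⟩ : N)) := by
      refine linearIndependent_unique_iff.mpr ?_
      intro hcontr
      apply hc₀ne
      simpa [Submodule.mk_eq_zero] using hcontr
    have hgspan : ⊤ ≤ span ℤ (Set.range fun _ : Fin 1 => (⟨c₀, hc₀N⟩ : N)) := by
      intro z _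
      have hz : (↑z : Fin (q+1) → ℤ) ∈ span ℤ ({c₀} : Set _) := z.2
      rw [mem_span_singleton] at hz
      obtain ⟨s, hsz⟩ := hz
      have hzz : z = s • (⟨c₀, hc₀N⟩ : N) := Subtype.ext (by rw [← hsz]; rfl)
      rw [hzz]
      exact smul_mem _ s (subset_span ⟨0, rfl⟩)
    let bN1 : Module.Basis (Fin 1) ℤ N := Module.Basis.mk hg hgspan
    have e := bN1.indexEquiv snf.bN
    have := Fintype.card_congr e
    simpa using this.symm
  subst hn1
  set t : ℤ := snf.bN.repr ⟨c₀, hc₀N⟩ 0 * snf.a 0 with ht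
  have hrepr : c₀ = t • (snf.bM (snf.f 0)) := by
    have h1 := snf.bN.sum_repr ⟨c₀, hc₀N⟩
    rw [Fin.sum_univ_one] at h1
    have h2 : c₀ = snf.bN.repr ⟨c₀, hc₀N⟩ 0 • ((snf.bN 0 : N) : Fin (q+1) → ℤ) := by
      calc c₀ = ((⟨c₀, hc₀N⟩ : N) : Fin (q+1) → ℤ) := rfl
      _ = ((snf.bN.repr ⟨c₀, hc₀N⟩ 0 • (snf.bN 0) : N) : Fin (q+1) → ℤ) := by rw [h1]
      _ = snf.bN.repr ⟨c₀, hc₀N⟩ 0 • ((snf.bN 0 : N) : Fin (q+1) → ℤ) := rfl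
    rw [snf.snf 0, smul_smul] at h2
    exact h2
  set σ : Fin (q+1) ≃ Fin (q+1) := Equiv.swap 0 (snf.f 0) with hσ
  set B : Fin (q+1) → (Fin (q+1) → ℤ) := fun i => snf.bM (σ i) with hB
  have hBbasis : Set.range B = Set.range ⇑snf.bM := by
    rw [hB]
    exact Set.range_comp ⇑snf.bM σ ▸ (σ.surjective.range_comp _)
  set u : Fin (q+1) → E := fun i => ΦZ (B i) with hu
  have hspan : span ℤ (Set.range u) = span ℤ (Set.range v) := by
    have h1 : Set.range u = ΦZ '' Set.range B := by
      rw [hu, ← Set.range_comp]; rfl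
    rw [h1, ← Submodule.map_span, hBbasis, snf.bM.span_eq, Submodule.map_top, hrange]
  have hspanR : span ℝ (Set.range u) = span ℝ (Set.range v) := by
    apply le_antisymm
    · rw [span_le]
      rintro x ⟨i, rfl⟩
      have : u i ∈ span ℤ (Set.range v) := hspan ▸ subset_span (Set.mem_range_self i)
      exact span_subset_span ℤ ℝ _ this
    · rw [span_le]
      rintro x ⟨i, rfl⟩
      have : v i ∈ span ℤ (Set.range u) := by
        rw [hspan]; exact subset_span (Set.mem_range_self i)
      exact span_subset_span ℤ ℝ _ this
  have hindep : LinearIndependent ℝ u := by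
    rw [linearIndependent_iff_card_eq_finrank_span]
    rw [linearIndependent_iff_card_eq_finrank_span] at hv
    refine hv.trans ?_
    rw [Set.finrank, Set.finrank, hspanR]
  have hP : ∀ i, u i = ∑ j, ((B i j : ℤ) : ℝ) • v j := by
    intro i
    rw [hu]
    dsimp only
    rw [hΦZ_apply]
    exact Finset.sum_congr rfl fun j _ => (Int.cast_smul_eq_zsmul ℝ (B i j) (v j)).symm
  set Pint : Matrix (Fin (q+1)) (Fin (q+1)) ℤ := Matrix.of fun i j => B i j with hPint
  set P : Matrix (Fin (q+1)) (Fin (q+1)) ℝ := Pint.map (Int.cast : ℤ → ℝ) with hPdef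
  have hdet : (Matrix.of fun i j => (⟪u i, u j⟫ : ℝ)).det =
      (Matrix.of fun i j => (⟪v i, v j⟫ : ℝ)).det := by
    have h1 : (Matrix.of fun i j => (⟪u i, u j⟫ : ℝ)) =
        P * (Matrix.of fun i j => (⟪v i, v j⟫ : ℝ)) * P.transpose := by
      have h2 := gram_transform v P
      rw [← h2]
      ext i j
      simp only [Matrix.of_apply]
      rw [hP i, hP j]
      rfl
    rw [h1, Matrix.det_mul, Matrix.det_mul, Matrix.det_transpose]
    have hPB : Pint = (std.toMatrix B).transpose := by
      ext i j
      simp [hPint, hstd, Module.Basis.toMatrix_apply, Pi.basisFun_repr]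
    have hunit : IsUnit (std.toMatrix B) := by
      have hInv : Invertible (std.toMatrix B) := by
        have hBb : B = ⇑(snf.bM.reindex σ.symm) := by
          funext i
          rw [hB, Module.Basis.reindex_apply, Equiv.symm_symm]
        rw [hBb]
        exact std.invertibleToMatrix (snf.bM.reindex σ.symm)
      exact isUnit_of_invertible _
    have hdu : IsUnit Pint.det := by
      rw [hPB, Matrix.det_transpose]
      exact hunit.map Matrix.detMonoidHom
    rw [Int.isUnit_iff] at hdu
    have hPd : P.det = ((Pint.det : ℤ) : ℝ) := ((Int.castRingHom ℝ)).map_det Pint |>.symm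
    rcases hdu with h | h <;> rw [hPd, h] <;> norm_num
  refine ⟨u, hspan, hindep, hdet, ⟨t, ?_⟩⟩
  have hσ0 : σ 0 = snf.f 0 := Equiv.swap_apply_left _ _
  rw [← hΦc₀]
  conv_lhs => rw [hrepr]
  rw [map_zsmul]
  congr 1


set_option maxHeartbeats 1000000 in
lemma proj_succMin_ge {q' : ℕ} (u : Fin (q'+1) → E) (hu : LinearIndependent ℝ u)
    (hshort : ∀ x ∈ span ℤ (Set.range u), x ≠ 0 → ‖u 0‖ ≤ ‖x‖)
    {i : ℕ} (hi : 1 ≤ i) (hi' : i ≤ q') :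
    Real.sqrt 3 / 2 * succMin (↑(span ℤ (Set.range u)) : Set E) (i+1) ≤
      succMin (↑(span ℤ (Set.range (⇑(pr (u 0)) ∘ u ∘ Fin.succ))) : Set E) i := by
  classical
  set w : E := u 0 with hwdef
  have hw : w ≠ 0 := hu.ne_zero 0
  have hμpos : (0:ℝ) < ‖w‖ := norm_pos_iff.mpr hw
  set g : Fin q' → E := ⇑(pr w) ∘ u ∘ Fin.succ with hg
  have hwmem : w ∈ span ℤ (Set.range u) := subset_span (Set.mem_range_self 0)
  -- independence of g
  have hgind : LinearIndependent ℝ g := by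
    rw [Fintype.linearIndependent_iff]
    intro a ha
    have hy : pr w (∑ j, a j • u (Fin.succ j)) = 0 := by
      rw [map_sum, ← ha]
      exact Finset.sum_congr rfl fun j _ => by rw [map_smul]; rfl
    set S : E := ∑ j, a j • u (Fin.succ j) with hS
    set c : ℝ := ⟪w, S⟫ / ‖w‖^2 with hc
    have hy2 : S - c • w = 0 := by rw [hc, ← pr_apply]; exact hy
    have hall := Fintype.linearIndependent_iff.mp hu (Fin.cons (-c) a) ?_
    · intro j
      have := hall j.succ
      simpa using this
    · rw [Fin.sum_univ_succ]
      simp only [Fin.cons_zero, Fin.cons_succ]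
      have heq : (-c) • w + ∑ j, a j • u (Fin.succ j) =
          (∑ j, a j • u (Fin.succ j)) - c • w := by module
      rw [heq, ← hS]
      exact hy2
  -- the ambient lattice
  set Λ : Set E := (↑(span ℤ (Set.range u)) : Set E) with hΛ
  -- lower bound for succMin Λ (i+1) by μ
  have hμle : ‖w‖ ≤ succMin Λ (i+1) := by
    refine le_succMin (smSet_nonempty_of_family (u ∘ Fin.castLE (by omega : i+1 ≤ q'+1))
      (fun j => subset_span (Set.mem_range_self _))
      (hu.comp _ (Fin.castLE_injective _))) ?_
    rintro l ⟨y, hy1, hy2, hy3⟩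
    have h0 : y 0 ≠ 0 := hy3.ne_zero 0
    exact le_trans (hshort (y 0) (hy1 0) h0) (hy2 0)
  have hlampos : (0:ℝ) < succMin Λ (i+1) := lt_of_lt_of_le hμpos hμle
  -- main bound
  refine le_succMin (smSet_nonempty_of_family (g ∘ Fin.castLE hi')
      (fun j => subset_span (Set.mem_range_self _))
      (hgind.comp _ (Fin.castLE_injective _))) ?_
  rintro l ⟨z, hz1, hz2, hz3⟩
  have hl0 : (0:ℝ) ≤ l := le_trans (norm_nonneg (z ⟨0, hi⟩)) (hz2 ⟨0, hi⟩)
  -- lift each z j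
  have hzlift : ∀ j : Fin i, ∃ x' : E, x' ∈ span ℤ (Set.range u) ∧ pr w x' = z j ∧
      |⟪w, x'⟫ / ‖w‖^2| ≤ 1/2 := by
    intro j
    obtain ⟨mco, hmco⟩ := (mem_span_range_iff_exists_fun ℤ).mp (hz1 j)
    set x : E := ∑ k, mco k • u (Fin.succ k) with hx
    have hxmem : x ∈ span ℤ (Set.range u) :=
      sum_mem fun k _ => zsmul_mem (subset_span (Set.mem_range_self _)) _
    have hprx : pr w x = z j := by
      rw [hx, map_sum]
      rw [← hmco]
      exact Finset.sum_congr rfl fun k _ => by rw [map_zsmul]; rfl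
    set kj : ℤ := round (⟪w, x⟫ / ‖w‖^2) with hkj
    refine ⟨x - kj • w, sub_mem hxmem (zsmul_mem hwmem _), ?_, ?_⟩
    · rw [map_sub, map_zsmul, pr_w w hw, smul_zero, sub_zero, hprx]
    · have h1 : ⟪w, x - kj • w⟫ = ⟪w, x⟫ - (kj : ℝ) * ‖w‖^2 := by
        rw [inner_sub_right, ← Int.cast_smul_eq_zsmul ℝ kj w, real_inner_smul_right,
          real_inner_self_eq_norm_sq]
      rw [h1, sub_div, mul_div_assoc, div_self (by positivity : ‖w‖^2 ≠ 0), mul_one]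
      exact abs_sub_round _
  choose x' hx'mem hx'pr hx's using hzlift
  -- norms of lifts
  have hx'norm : ∀ j, ‖x' j‖^2 ≤ l^2 + ‖w‖^2/4 := by
    intro j
    have h1 := pr_norm_sq w (x' j) hw
    rw [hx'pr j] at h1
    have h2 : ‖z j‖^2 ≤ l^2 := by
      have := hz2 j
      nlinarith [norm_nonneg (z j)]
    have h3 : (⟪w, x' j⟫ / ‖w‖^2)^2 ≤ 1/4 := by
      have := hx's j
      nlinarith [abs_nonneg (⟪w, x' j⟫ / ‖w‖^2), sq_abs (⟪w, x' j⟫ / ‖w‖^2)]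
    nlinarith [sq_nonneg ‖w‖]
  -- the (i+1)-family
  set F : Fin (i+1) → E := Fin.cons w x' with hF
  have hFmem : ∀ j, F j ∈ Λ := by
    intro j
    refine Fin.cases ?_ ?_ j
    · exact hwmem
    · intro j'; exact hx'mem j'
  have hFind : LinearIndependent ℝ F := by
    rw [Fintype.linearIndependent_iff]
    intro b hb
    rw [Fin.sum_univ_succ] at hb
    simp only [hF, Fin.cons_zero, Fin.cons_succ] at hb
    have hb2 : pr w (b 0 • w + ∑ j, b j.succ • x' j) = 0 := by rw [hb, map_zero]
    rw [map_add, map_smul, pr_w w hw, smul_zero, zero_add, map_sum] at hb2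
    have hb3 : ∑ j, b j.succ • z j = 0 := by
      rw [← hb2]
      exact Finset.sum_congr rfl fun j _ => by rw [map_smul, hx'pr j]
    have hzero : ∀ j : Fin i, b j.succ = 0 :=
      fun j => Fintype.linearIndependent_iff.mp hz3 (fun j => b j.succ) hb3 j
    have hb0 : b 0 • w = 0 := by
      rw [← hb]
      rw [Finset.sum_eq_zero fun j _ => by rw [hzero j, zero_smul]]
      rw [add_zero]
    have hb00 : b 0 = 0 := by
      rcases smul_eq_zero.mp hb0 with h | h
      · exact h
      · exact absurd h hw
    intro j
    refine Fin.cases hb00 hzero j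
  -- bound on succMin Λ (i+1)
  set lmax : ℝ := max ‖w‖ (Real.sqrt (l^2 + ‖w‖^2/4)) with hlmax
  have hFnorm : ∀ j, ‖F j‖ ≤ lmax := by
    intro j
    refine Fin.cases ?_ ?_ j
    · exact le_max_left _ _
    · intro j'
      simp only [hF, Fin.cons_succ]
      refine le_trans ?_ (le_max_right _ _)
      rw [← Real.sqrt_sq (norm_nonneg (x' j'))]
      exact Real.sqrt_le_sqrt (hx'norm j')
  have hsm := succMin_le_of_family (Nat.succ_pos i) F hFmem hFnorm hFind
  -- x' 0 is nonzero, giving the small-μ case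
  have hx'0ne : x' ⟨0, hi⟩ ≠ 0 := by
    intro h0
    have := hx'pr ⟨0, hi⟩
    rw [h0, map_zero] at this
    exact hz3.ne_zero ⟨0, hi⟩ this.symm
  have hμx : ‖w‖^2 ≤ l^2 + ‖w‖^2/4 := by
    have h1 := hshort (x' ⟨0, hi⟩) (hx'mem _) hx'0ne
    have h2 := hx'norm ⟨0, hi⟩
    nlinarith [norm_nonneg (x' ⟨0, hi⟩), norm_nonneg w]
  -- combine
  set lam : ℝ := succMin Λ (i+1) with hlam
  have hkey : lam^2 ≤ l^2 + ‖w‖^2/4 := by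
    rcases le_max_iff.mp hsm with h | h
    · nlinarith
    · have := Real.sq_sqrt (by positivity : (0:ℝ) ≤ l^2 + ‖w‖^2/4)
      nlinarith
  have h34 : 3/4 * lam^2 ≤ l^2 := by nlinarith
  have hs3 := Real.sq_sqrt (by norm_num : (0:ℝ) ≤ 3)
  nlinarith [Real.sqrt_nonneg 3, hlampos.le, hl0]
lemma pr_tail_linearIndependent {q' : ℕ} (u : Fin (q'+1) → E) (hu : LinearIndependent ℝ u) :
    LinearIndependent ℝ (⇑(pr (u 0)) ∘ u ∘ Fin.succ) := by
  classical
  set w : E := u 0 with hwdef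
  have hw : w ≠ 0 := hu.ne_zero 0
  rw [Fintype.linearIndependent_iff]
  intro a ha
  have hy : pr w (∑ j, a j • u (Fin.succ j)) = 0 := by
    rw [map_sum, ← ha]
    exact Finset.sum_congr rfl fun j _ => by rw [map_smul]; rfl
  set S : E := ∑ j, a j • u (Fin.succ j) with hS
  set c : ℝ := ⟪w, S⟫ / ‖w‖^2 with hc
  have hy2 : S - c • w = 0 := by rw [hc, ← pr_apply]; exact hy
  have hall := Fintype.linearIndependent_iff.mp hu (Fin.cons (-c) a) ?_
  · intro j
    have := hall j.succ
    simpa using this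
  · rw [Fin.sum_univ_succ]
    simp only [Fin.cons_zero, Fin.cons_succ]
    have heq : (-c) • w + ∑ j, a j • u (Fin.succ j) =
        (∑ j, a j • u (Fin.succ j)) - c • w := by module
    rw [heq, ← hS]
    exact hy2

lemma succMin_pos' {n : ℕ} (hn : 0 < n) (v : Fin n → E) (hv : LinearIndependent ℝ v)
    {k : ℕ} (hk : 1 ≤ k) (hkn : k ≤ n) :
    0 < succMin (↑(span ℤ (Set.range v)) : Set E) k := by
  obtain ⟨w, hwmem, hwne, hwshort⟩ := exists_shortest hn v hv
  have hμ : (0:ℝ) < ‖w‖ := norm_pos_iff.mpr hwne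
  refine lt_of_lt_of_le hμ (le_succMin (smSet_nonempty_of_family (v ∘ Fin.castLE hkn)
    (fun j => subset_span (Set.mem_range_self _)) (hv.comp _ (Fin.castLE_injective _))) ?_)
  rintro l ⟨y, hy1, hy2, hy3⟩
  exact le_trans (hwshort (y ⟨0, hk⟩) (hy1 _) (hy3.ne_zero _)) (hy2 _)

set_option maxHeartbeats 1600000 in
lemma covol_ge : ∀ (q : ℕ) (d : ℕ) (v : Fin q → EuclideanSpace ℝ (Fin d)),
    LinearIndependent ℝ v →
    (Real.sqrt 3 / 2)^(q*q) *
      ∏ i ∈ Finset.range q,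
        succMin (↑(span ℤ (Set.range v)) : Set (EuclideanSpace ℝ (Fin d))) (i+1)
      ≤ gramCovol v := by
  intro q
  induction q with
  | zero =>
    intro d v hv
    simp only [Nat.zero_eq, Nat.mul_zero, pow_zero, Finset.range_zero, Finset.prod_empty,
      mul_one, one_mul, gramCovol]
    rw [Matrix.det_isEmpty, Real.sqrt_one]
  | succ q IH =>
    intro d v hv
    classical
    have ha0 : (0:ℝ) < Real.sqrt 3 / 2 := by positivity
    have ha1 : Real.sqrt 3 / 2 ≤ 1 := by
      rw [div_le_one (by norm_num : (0:ℝ) < 2)]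
      calc Real.sqrt 3 ≤ Real.sqrt 4 := Real.sqrt_le_sqrt (by norm_num)
      _ = 2 := by rw [show (4:ℝ) = 2^2 by norm_num, Real.sqrt_sq (by norm_num : (0:ℝ) ≤ 2)]
    obtain ⟨w₀, hw₀mem, hw₀ne, hw₀short⟩ := exists_shortest (Nat.succ_pos q) v hv
    obtain ⟨u, huspan, huind, hudet, c, hc⟩ := exists_good_basis v hv w₀ hw₀mem hw₀ne
    set w := u 0 with hwdef
    have hu0ne : w ≠ 0 := huind.ne_zero 0
    have hu0mem : w ∈ span ℤ (Set.range v) := huspan ▸ subset_span (Set.mem_range_self 0)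
    have hμ : (0:ℝ) < ‖w‖ := norm_pos_iff.mpr hu0ne
    have hcne : c ≠ 0 := by
      rintro rfl
      rw [zero_smul] at hc
      exact hw₀ne hc
    have hcabs : (1:ℝ) ≤ |(c:ℝ)| := by
      have := Int.one_le_abs hcne
      exact_mod_cast this
    have hnorm_eq : ‖w‖ = ‖w₀‖ := by
      have h1 : ‖w₀‖ ≤ ‖w‖ := hw₀short w hu0mem hu0ne
      have h2 : ‖w₀‖ = |(c:ℝ)| * ‖w‖ := by
        rw [hc, ← Int.cast_smul_eq_zsmul ℝ c w, norm_smul, Real.norm_eq_abs]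
      nlinarith
    have hshort' : ∀ x ∈ span ℤ (Set.range u), x ≠ 0 → ‖w‖ ≤ ‖x‖ := by
      intro x hx hxne
      rw [hnorm_eq]
      exact hw₀short x (huspan ▸ hx) hxne
    set g : Fin q → EuclideanSpace ℝ (Fin d) := ⇑(pr w) ∘ u ∘ Fin.succ with hgdef
    have hgind : LinearIndependent ℝ g := pr_tail_linearIndependent u huind
    -- determinant split
    set z : Fin (q+1) → EuclideanSpace ℝ (Fin d) := Fin.cons w g with hz
    set tco : Fin q → ℝ := fun j => ⟪w, u j.succ⟫ / ‖w‖^2 with htco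
    set T : Matrix (Fin (q+1)) (Fin (q+1)) ℝ := Matrix.of fun i j =>
      Fin.cases (Fin.cases (1:ℝ) (fun _ => (0:ℝ)) j)
        (fun i' => Fin.cases (tco i') (fun j' => if i' = j' then (1:ℝ) else 0) j) i with hT
    have hTu : ∀ i, u i = ∑ j, T i j • z j := by
      intro i
      refine Fin.cases ?_ ?_ i
      · rw [Fin.sum_univ_succ]
        simp [hT, hz, hwdef]
      · intro i'
        rw [Fin.sum_univ_succ]
        simp only [hT, hz, Matrix.of_apply, Fin.cases_zero, Fin.cases_succ, Fin.cons_zero,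
          Fin.cons_succ]
        simp only [ite_smul, one_smul, zero_smul, Finset.sum_ite_eq, Finset.mem_univ, if_true]
        have : g i' = u i'.succ - tco i' • w := by
          simp only [hgdef, Function.comp_apply, htco]
          rw [pr_apply]
        rw [this]
        module
    have hdetT : T.det = 1 := by
      have htri : T.BlockTriangular OrderDual.toDual := by
        intro i j hij
        have hij' : i < j := hij
        refine Fin.cases (fun hj => ?_) (fun i' hj => ?_) i hij' <;> [skip; skip]
        · -- i = 0 < j, so j = succ
          obtain ⟨j', rfl⟩ := Fin.exists_succ_eq.mpr (Fin.pos_iff_ne_zero.mp hj)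
          simp [hT]
        · obtain ⟨j', rfl⟩ := Fin.exists_succ_eq.mpr (Fin.pos_iff_ne_zero.mp
            (lt_trans (Fin.succ_pos i') hj))
          have hne : i' ≠ j' := by
            intro h
            subst h
            exact lt_irrefl _ hj
          simp [hT, hne]
      rw [Matrix.det_of_lowerTriangular T htri]
      refine Finset.prod_eq_one fun i _ => ?_
      refine Fin.cases ?_ (fun i' => ?_) i
      · simp [hT]
      · simp [hT]
    have hdet_split : (Matrix.of fun i j => (⟪u i, u j⟫ : ℝ)).det =
        ‖w‖^2 * (Matrix.of fun i j => (⟪g i, g j⟫ : ℝ)).det := by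
      have h1 : (Matrix.of fun i j => (⟪u i, u j⟫ : ℝ)) =
          T * (Matrix.of fun i j => (⟪z i, z j⟫ : ℝ)) * T.transpose := by
        rw [← gram_transform z T]
        ext i j
        simp only [Matrix.of_apply]
        rw [← hTu i, ← hTu j]
      rw [h1, Matrix.det_mul, Matrix.det_mul, Matrix.det_transpose, hdetT, one_mul, mul_one]
      have h2 : ∀ j, (⟪w, g j⟫ : ℝ) = 0 := fun j => inner_pr w _ hu0ne
      exact det_gram_cons_orth w g h2
    have hcov : gramCovol v = ‖w‖ * gramCovol g := by
      unfold gramCovol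
      rw [← hudet, hdet_split, Real.sqrt_mul (sq_nonneg ‖w‖), Real.sqrt_sq (norm_nonneg w)]
    -- inductive step bounds
    have hIH := IH d g hgind
    have hchain : ∀ i ∈ Finset.range q,
        Real.sqrt 3 / 2 * succMin (↑(span ℤ (Set.range v)) : Set (EuclideanSpace ℝ (Fin d))) (i+2) ≤
          succMin (↑(span ℤ (Set.range g)) : Set (EuclideanSpace ℝ (Fin d))) (i+1) := by
      intro i hi
      rw [Finset.mem_range] at hi
      have := proj_succMin_ge u huind hshort' (i := i+1) (by omega) (by omega)
      rw [huspan] at this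
      exact this
    have hmpos : ∀ k, 1 ≤ k → k ≤ q+1 →
        0 < succMin (↑(span ℤ (Set.range v)) : Set (EuclideanSpace ℝ (Fin d))) k :=
      fun k h1 h2 => succMin_pos' (Nat.succ_pos q) v hv h1 h2
    have hm1w : succMin (↑(span ℤ (Set.range v)) : Set (EuclideanSpace ℝ (Fin d))) 1 ≤ ‖w‖ := by
      refine succMin_le_of_family one_pos (fun _ : Fin 1 => w)
        (fun _ => hu0mem) (fun _ => le_refl _) ?_
      exact linearIndependent_unique_iff.mpr hu0ne
    -- combine everything
    set a : ℝ := Real.sqrt 3 / 2 with hadef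
    set m : ℕ → ℝ := fun k => succMin (↑(span ℤ (Set.range v)) : Set (EuclideanSpace ℝ (Fin d))) k with hm
    have hprod_split : ∏ i ∈ Finset.range (q+1), m (i+1) =
        (∏ i ∈ Finset.range q, m (i+2)) * m 1 := by
      rw [Finset.prod_range_succ']
    have hstep1 : a^q * ∏ i ∈ Finset.range q, m (i+2) ≤
        ∏ i ∈ Finset.range q, succMin (↑(span ℤ (Set.range g)) : Set (EuclideanSpace ℝ (Fin d))) (i+1) := by
      have := Finset.prod_le_prod (f := fun i => a * m (i+2))
        (g := fun i => succMin (↑(span ℤ (Set.range g)) : Set (EuclideanSpace ℝ (Fin d))) (i+1))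
        (s := Finset.range q) ?_ ?_
      · calc a^q * ∏ i ∈ Finset.range q, m (i+2)
            = ∏ i ∈ Finset.range q, (a * m (i+2)) := by
              rw [Finset.prod_mul_distrib, Finset.prod_const]
              congr 1
              rw [Finset.card_range]
        _ ≤ _ := this
      · intro i hi
        rw [Finset.mem_range] at hi
        have := hmpos (i+2) (by omega) (by omega)
        positivity
      · exact hchain
    have hPgpos : 0 ≤ ∏ i ∈ Finset.range q, succMin (↑(span ℤ (Set.range g)) : Set (EuclideanSpace ℝ (Fin d))) (i+1) := by
      refine le_trans ?_ hstep1
      have : 0 ≤ ∏ i ∈ Finset.range q, m (i+2) := by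
        refine Finset.prod_nonneg fun i hi => ?_
        rw [Finset.mem_range] at hi
        exact (hmpos (i+2) (by omega) (by omega)).le
      positivity
    have hcovg : 0 ≤ gramCovol g := Real.sqrt_nonneg _
    have hmprod2 : 0 ≤ ∏ i ∈ Finset.range q, m (i+2) := by
      refine Finset.prod_nonneg fun i hi => ?_
      rw [Finset.mem_range] at hi
      exact (hmpos (i+2) (by omega) (by omega)).le
    have hm1pos : 0 < m 1 := hmpos 1 le_rfl (by omega)
    -- final calculation
    rw [hcov, hprod_split]
    have hexp : (q+1)*(q+1) = q*q + q + (q+1) := by ring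
    rw [hexp, pow_add, pow_add]
    have haq1 : a^(q+1) ≤ 1 := pow_le_one₀ ha0.le ha1
    have hapow : (0:ℝ) < a^(q*q) := pow_pos ha0 _
    have hapq : (0:ℝ) < a^q := pow_pos ha0 _
    calc a ^ (q*q) * a^q * a^(q+1) * ((∏ i ∈ Finset.range q, m (i+2)) * m 1)
        ≤ a ^ (q*q) * a^q * 1 * ((∏ i ∈ Finset.range q, m (i+2)) * m 1) := by
          have h0 : 0 ≤ (∏ i ∈ Finset.range q, m (i+2)) * m 1 := by positivity
          nlinarith [mul_nonneg (mul_nonneg hapow.le hapq.le) h0]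
    _ = (a^q * ∏ i ∈ Finset.range q, m (i+2)) * (a^(q*q) * m 1) := by ring
    _ ≤ (∏ i ∈ Finset.range q, succMin (↑(span ℤ (Set.range g)) : Set (EuclideanSpace ℝ (Fin d))) (i+1)) *
          (a^(q*q) * m 1) := by
          refine mul_le_mul_of_nonneg_right hstep1 ?_
          positivity
    _ = (a^(q*q) * ∏ i ∈ Finset.range q, succMin (↑(span ℤ (Set.range g)) : Set (EuclideanSpace ℝ (Fin d))) (i+1)) *
          m 1 := by ring
    _ ≤ gramCovol g * m 1 := mul_le_mul_of_nonneg_right hIH hm1pos.le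
    _ ≤ gramCovol g * ‖w‖ := mul_le_mul_of_nonneg_left hm1w hcovg
    _ = ‖w‖ * gramCovol g := by ring
end RSCLB

open RSCLB Submodule

set_option maxHeartbeats 1600000 in
/-- Let `Λ ⊂ ℝᵈ` be a full-rank lattice, and `V_q` the span of the first `q` vectors of a
basis `r` of `Λ` satisfying the Minkowski estimates `log‖rᵢ‖ = log λᵢ(Λ) + O(1)`. Then for
every `Λ`-rational `q`-dimensional subspace `V'_q ≠ V_q` (given by a `ℤ`-basis `v` of
`V'_q ∩ Λ`), the covolume satisfies
`log‖V'_q‖ ≥ Σ_{i=1}^{q-1} log λᵢ(Λ) + log λ_{q+1}(Λ) - O(1)`, with implied constant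
depending only on `d` (and the Minkowski constant `C₀`). -/
theorem rational_subspace_covolume_lower_bound (d : ℕ) (hd : 0 < d) (C₀ : ℝ) (hC₀ : 0 < C₀) :
    ∃ C : ℝ, 0 < C ∧ ∀ b : Module.Basis (Fin d) ℝ (EuclideanSpace ℝ (Fin d)),
      ∀ r : Fin d → EuclideanSpace ℝ (Fin d),
        (∀ i, r i ∈ Submodule.span ℤ (Set.range ⇑b)) →
        LinearIndependent ℝ r →
        Submodule.span ℤ (Set.range r) = Submodule.span ℤ (Set.range ⇑b) →
        (∀ i : Fin d,
          |Real.log ‖r i‖ -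
            Real.log (succMin (Submodule.span ℤ (Set.range ⇑b) :
              Set (EuclideanSpace ℝ (Fin d))) ((i : ℕ) + 1))| ≤ C₀) →
        ∀ q : ℕ, 1 ≤ q → ∀ hq : q + 1 ≤ d,
          ∀ v : Fin q → EuclideanSpace ℝ (Fin d),
            (∀ i, v i ∈ Submodule.span ℤ (Set.range ⇑b)) →
            LinearIndependent ℝ v →
            (Submodule.span ℤ (Set.range v) =
              Submodule.span ℤ (Set.range ⇑b) ⊓
                (Submodule.span ℝ (Set.range v)).restrictScalars ℤ) →
            (Submodule.span ℝ (Set.range v) ≠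
              Submodule.span ℝ (Set.range fun i : Fin q => r (Fin.castLE (Nat.le_of_succ_le hq) i))) →
            (∑ i ∈ Finset.range (q - 1),
                Real.log (succMin (Submodule.span ℤ (Set.range ⇑b) :
                  Set (EuclideanSpace ℝ (Fin d))) (i + 1))) +
              Real.log (succMin (Submodule.span ℤ (Set.range ⇑b) :
                Set (EuclideanSpace ℝ (Fin d))) (q + 1)) - C ≤
              Real.log (gramCovol v) := by
  classical
  refine ⟨C₀ + (d*d) * Real.log 2 + 1, by positivity, ?_⟩
  intro b r hr1 hrind hrspan hrC₀ q hq1 hq v hv1 hvind hvprim hvne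
  obtain ⟨t, rfl⟩ : ∃ t, q = t + 1 := ⟨q - 1, (Nat.succ_pred_eq_of_pos hq1).symm⟩
  have hqd : t + 1 ≤ d := Nat.le_of_succ_le hq
  set Λ : Set (EuclideanSpace ℝ (Fin d)) := ↑(span ℤ (Set.range ⇑b)) with hΛ
  set m : ℕ → ℝ := fun k => succMin Λ k with hm
  set Mset : Set (EuclideanSpace ℝ (Fin d)) := ↑(span ℤ (Set.range v)) with hMset
  have hsubM : span ℤ (Set.range v) ≤ span ℤ (Set.range ⇑b) := by
    rw [span_le]
    rintro x ⟨i, rfl⟩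
    exact hv1 i
  have hsub : Mset ⊆ Λ := fun x hx => hsubM hx
  have hbind : LinearIndependent ℝ (⇑b) := b.linearIndependent
  -- positivity facts
  have hmpos : ∀ k, 1 ≤ k → k ≤ d → 0 < m k := by
    intro k h1 h2
    exact succMin_pos' hd (⇑b) hbind h1 h2
  have hMpos : ∀ k, 1 ≤ k → k ≤ (t+1) → 0 < succMin Mset k := by
    intro k h1 h2
    exact succMin_pos' (Nat.succ_pos t) v hvind h1 h2
  have hmM : ∀ k, 1 ≤ k → k ≤ (t+1) → m k ≤ succMin Mset k := by
    intro k h1 h2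
    exact succMin_le_succMin hsub h1 le_rfl (smSet_nonempty_of_family (v ∘ Fin.castLE h2)
      (fun j => subset_span (Set.mem_range_self _)) (hvind.comp _ (Fin.castLE_injective _)))
  -- the core bound, in logarithmic form
  have hcore := covol_ge (t+1) d v hvind
  have hprodpos : 0 < ∏ i ∈ Finset.range (t+1), succMin Mset (i+1) := by
    refine Finset.prod_pos fun i hi => ?_
    rw [Finset.mem_range] at hi
    exact hMpos (i+1) (by omega) (by omega)
  have hapos : (0:ℝ) < Real.sqrt 3 / 2 := by positivity
  have hcovpos : 0 < gramCovol v := by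
    refine lt_of_lt_of_le ?_ hcore
    positivity
  have hla : -Real.log 2 ≤ Real.log (Real.sqrt 3 / 2) := by
    rw [Real.log_div (by positivity) (by norm_num), Real.log_sqrt (by norm_num)]
    have h3 : (0:ℝ) ≤ Real.log 3 := Real.log_nonneg (by norm_num)
    linarith
  have hlog2 : (0:ℝ) ≤ Real.log 2 := Real.log_nonneg (by norm_num)
  have hqd2 : ((t:ℝ)+1) * ((t:ℝ)+1) ≤ (d:ℝ) * (d:ℝ) := by
    have h1 : ((t:ℝ)+1) ≤ (d:ℝ) := by exact_mod_cast hqd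
    have h0 : (0:ℝ) ≤ ((t:ℝ)+1) := by positivity
    nlinarith
  have hlog : ∑ i ∈ Finset.range (t+1), Real.log (succMin Mset (i+1)) ≤
      Real.log (gramCovol v) + (d*d) * Real.log 2 := by
    have h1 := Real.log_le_log (by positivity) hcore
    rw [Real.log_mul (by positivity) hprodpos.ne', Real.log_pow,
      Real.log_prod (fun i hi => by
        rw [Finset.mem_range] at hi
        exact (hMpos (i+1) (by omega) (by omega)).ne')] at h1
    have h2 : -((d:ℝ)*d) * Real.log 2 ≤ (((t+1)*(t+1) : ℕ) : ℝ) * Real.log (Real.sqrt 3 / 2) := by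
      push_cast
      have h0 : (0:ℝ) ≤ ((t:ℝ)+1)*((t:ℝ)+1) := by positivity
      nlinarith [mul_le_mul_of_nonneg_left hla h0, mul_le_mul_of_nonneg_right hqd2 hlog2]
    linarith
  -- split the target sum
  have hsum : ∑ i ∈ Finset.range (t+1), Real.log (m (i+1)) =
      (∑ i ∈ Finset.range t, Real.log (m (i+1))) + Real.log (m (t+1)) := by
    rw [Finset.sum_range_succ]
  have htq : t + 1 - 1 = t := by omega
  -- case split
  by_cases hcase : Real.log (m ((t+1)+1)) ≤ C₀ + Real.log (m (t+1))
  · -- easy case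
    have hterm : ∀ i ∈ Finset.range (t+1), Real.log (m (i+1)) ≤
        Real.log (succMin Mset (i+1)) := by
      intro i hi
      rw [Finset.mem_range] at hi
      exact Real.log_le_log (hmpos (i+1) (by omega) (by omega)) (hmM (i+1) (by omega) (by omega))
    have h3 := Finset.sum_le_sum hterm
    rw [htq]
    calc (∑ i ∈ Finset.range t, Real.log (m (i + 1))) + Real.log (m ((t+1)+1))
          - (C₀ + (d*d) * Real.log 2 + 1)
        ≤ (∑ i ∈ Finset.range t, Real.log (m (i + 1))) + Real.log (m (t+1)) + C₀
          - (C₀ + (d*d) * Real.log 2 + 1) := by linarith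
    _ = (∑ i ∈ Finset.range (t+1), Real.log (m (i+1))) + C₀ - (C₀ + (d*d) * Real.log 2 + 1) := by
        rw [hsum]; try ring
    _ ≤ (∑ i ∈ Finset.range (t+1), Real.log (succMin Mset (i+1))) + C₀
          - (C₀ + (d*d) * Real.log 2 + 1) := by linarith
    _ ≤ Real.log (gramCovol v) + (d*d) * Real.log 2 + C₀ - (C₀ + (d*d) * Real.log 2 + 1) := by
        linarith
    _ ≤ Real.log (gramCovol v) := by linarith
  · -- hard case : the q-th minimum of M is at least m ((t+1)+1)
    push_neg at hcase
    have hrq : ∀ j : Fin (t+1), ‖r (Fin.castLE (Nat.le_of_succ_le hq) j)‖ < m ((t+1)+1) := by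
      intro j
      have h1 := hrC₀ (Fin.castLE (Nat.le_of_succ_le hq) j)
      have hcoe : ((Fin.castLE (Nat.le_of_succ_le hq) j : Fin d) : ℕ) = (j : ℕ) := rfl
      rw [hcoe] at h1
      have h2 : Real.log ‖r (Fin.castLE (Nat.le_of_succ_le hq) j)‖ ≤
          C₀ + Real.log (m ((j:ℕ)+1)) := by
        have := abs_le.mp h1
        linarith [this.2]
      have h3 : m ((j:ℕ)+1) ≤ m (t+1) := by
        refine succMin_le_succMin (Set.Subset.refl Λ) (by omega) (by omega : (j:ℕ)+1 ≤ (t+1))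
          (smSet_nonempty_of_family (⇑b ∘ Fin.castLE hqd)
            (fun i => subset_span (Set.mem_range_self _))
            (hbind.comp _ (Fin.castLE_injective _)))
      have h4 : Real.log (m ((j:ℕ)+1)) ≤ Real.log (m (t+1)) :=
        Real.log_le_log (hmpos _ (by omega) (by omega)) h3
      have h5 : Real.log ‖r (Fin.castLE (Nat.le_of_succ_le hq) j)‖ < Real.log (m ((t+1)+1)) := by
        linarith
      have hrpos : 0 < ‖r (Fin.castLE (Nat.le_of_succ_le hq) j)‖ :=
        norm_pos_iff.mpr (hrind.ne_zero _)
      have hmq1pos : 0 < m ((t+1)+1) := hmpos ((t+1)+1) (by omega) hq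
      calc ‖r (Fin.castLE (Nat.le_of_succ_le hq) j)‖
          = Real.exp (Real.log ‖r (Fin.castLE (Nat.le_of_succ_le hq) j)‖) :=
            (Real.exp_log hrpos).symm
      _ < Real.exp (Real.log (m ((t+1)+1))) := Real.exp_lt_exp.mpr h5
      _ = m ((t+1)+1) := Real.exp_log hmq1pos
    have hclaim : m ((t+1)+1) ≤ succMin Mset (t+1) := by
      refine le_succMin (smSet_nonempty_of_family v
        (fun j => subset_span (Set.mem_range_self j)) hvind) ?_
      rintro l ⟨x, hx1, hx2, hx3⟩
      -- span of x equals span of v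
      have hxle : span ℝ (Set.range x) ≤ span ℝ (Set.range v) := by
        rw [span_le]
        rintro y ⟨j, rfl⟩
        exact span_subset_span ℤ ℝ _ (hx1 j)
      have hcardx := linearIndependent_iff_card_eq_finrank_span.mp hx3
      have hcardv := linearIndependent_iff_card_eq_finrank_span.mp hvind
      have hVx : span ℝ (Set.range x) = span ℝ (Set.range v) := by
        refine Submodule.eq_of_le_of_finrank_le hxle ?_
        rw [Set.finrank] at hcardx hcardv
        simp only [Fintype.card_fin] at hcardx hcardv
        omega
      -- some r j₀ outside the span of v
      have hj₀ : ∃ j₀ : Fin (t+1),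
          r (Fin.castLE (Nat.le_of_succ_le hq) j₀) ∉ span ℝ (Set.range v) := by
        by_contra hall
        push_neg at hall
        apply hvne
        refine (Submodule.eq_of_le_of_finrank_le ?_ ?_).symm
        · rw [span_le]
          rintro y ⟨j, rfl⟩
          exact hall j
        · have hcardr := linearIndependent_iff_card_eq_finrank_span.mp
            (hrind.comp (Fin.castLE (Nat.le_of_succ_le hq)) (Fin.castLE_injective _))
          have : (Set.range fun i : Fin (t+1) => r (Fin.castLE (Nat.le_of_succ_le hq) i)) =
              Set.range (r ∘ Fin.castLE (Nat.le_of_succ_le hq)) := rfl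
          rw [Set.finrank] at hcardr hcardv
          simp only [Fintype.card_fin] at hcardr hcardv
          rw [this]
          omega
      obtain ⟨j₀, hj₀⟩ := hj₀
      -- the extended family
      set y : Fin ((t+1)+1) → EuclideanSpace ℝ (Fin d) :=
        Fin.cons (r (Fin.castLE (Nat.le_of_succ_le hq) j₀)) x with hy
      have hyind : LinearIndependent ℝ y := by
        rw [hy, linearIndependent_fin_cons]
        refine ⟨hx3, ?_⟩
        rw [hVx]
        exact hj₀
      have hymem : ∀ j, y j ∈ Λ := by
        intro j
        refine Fin.cases ?_ ?_ j
        · exact hr1 _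
        · intro j'
          exact hsub (hx1 j')
      have hynorm : ∀ j, ‖y j‖ ≤ max l ‖r (Fin.castLE (Nat.le_of_succ_le hq) j₀)‖ := by
        intro j
        refine Fin.cases ?_ ?_ j
        · simp only [hy, Fin.cons_zero]
          exact le_max_right _ _
        · intro j'
          simp only [hy, Fin.cons_succ]
          exact le_trans (hx2 j') (le_max_left _ _)
      have hsm := succMin_le_of_family (Nat.succ_pos (t+1)) y hymem hynorm hyind
      rcases le_max_iff.mp hsm with h | h
      · exact h
      · exact absurd h (not_le.mpr (hrq j₀))
    -- conclude
    rw [htq]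
    have hterm : ∀ i ∈ Finset.range t, Real.log (m (i+1)) ≤
        Real.log (succMin Mset (i+1)) := by
      intro i hi
      rw [Finset.mem_range] at hi
      exact Real.log_le_log (hmpos (i+1) (by omega) (by omega)) (hmM (i+1) (by omega) (by omega))
    have h3 := Finset.sum_le_sum hterm
    have hlast : Real.log (m ((t+1)+1)) ≤ Real.log (succMin Mset (t+1)) :=
      Real.log_le_log (hmpos ((t+1)+1) (by omega) hq) hclaim
    have hsumM : ∑ i ∈ Finset.range (t+1), Real.log (succMin Mset (i+1)) =
        (∑ i ∈ Finset.range t, Real.log (succMin Mset (i+1))) +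
          Real.log (succMin Mset (t+1)) := by
      rw [Finset.sum_range_succ]
    calc (∑ i ∈ Finset.range t, Real.log (m (i + 1))) + Real.log (m ((t+1)+1))
          - (C₀ + (d*d) * Real.log 2 + 1)
        ≤ (∑ i ∈ Finset.range t, Real.log (succMin Mset (i+1))) +
            Real.log (succMin Mset (t+1)) - (C₀ + (d*d) * Real.log 2 + 1) := by linarith
    _ = (∑ i ∈ Finset.range (t+1), Real.log (succMin Mset (i+1)))
          - (C₀ + (d*d) * Real.log 2 + 1) := by rw [hsumM]
    _ ≤ Real.log (gramCovol v) + (d*d) * Real.log 2 - (C₀ + (d*d) * Real.log 2 + 1) := by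
        linarith
    _ ≤ Real.log (gramCovol v) := by linarith
end

section
/- A matrix A ∈ M_{m×n}(ℝ) is very singular (i.e. ω̂(A) > n/m) if and only if τ̂(A) := liminf_{t→∞} (-1/t) log λ₁(g_t u_A ℤᵈ) > 0; moreover τ̂(A) and ω = ω̂(A) are related by τ̂(A) = (1/n)·(ω - n/m)/(ω + 1). -/
open Filter

/-- The lattice vector `g_t u_A (p,q) = (e^{t/m}(Aq + p), e^{-t/n} q)` in
`ℝᵐ × ℝⁿ` (with the max norm). -/
noncomputable def gtuAVec (m n : ℕ) (A : Matrix (Fin m) (Fin n) ℝ) (t : ℝ)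
    (p : Fin m → ℤ) (q : Fin n → ℤ) : (Fin m → ℝ) × (Fin n → ℝ) :=
  (fun i => Real.exp (t / m) * ((p i : ℝ) + ∑ j, A i j * (q j : ℝ)),
   fun j => Real.exp (-t / n) * (q j : ℝ))

/-- The first successive minimum `λ₁(g_t u_A ℤᵈ)`: the infimum of the norms of the
nonzero lattice vectors. -/
noncomputable def lambdaOne (m n : ℕ) (A : Matrix (Fin m) (Fin n) ℝ) (t : ℝ) : ℝ :=
  sInf {r : ℝ | ∃ p : Fin m → ℤ, ∃ q : Fin n → ℤ, ¬(p = 0 ∧ q = 0) ∧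
    r = ‖gtuAVec m n A t p q‖}

/-- The uniform dynamical exponent `τ̂(A) = liminf_{t→∞} (-1/t) log λ₁(g_t u_A ℤᵈ)`. -/
noncomputable def tauHat (m n : ℕ) (A : Matrix (Fin m) (Fin n) ℝ) : ℝ :=
  liminf (fun t : ℝ => -Real.log (lambdaOne m n A t) / t) atTop

/-- The property defining the uniform exponent of irrationality: for all sufficiently
large `Q` there are integer vectors `p ∈ ℤᵐ`, `q ∈ ℤⁿ` with `‖Aq + p‖ ≤ Q^{-ω}` and
`0 < ‖q‖ ≤ Q`.  `ω̂(A)` is the supremum of the `ω` satisfying this property. -/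
def uniformApprox (m n : ℕ) (A : Matrix (Fin m) (Fin n) ℝ) (ω : ℝ) : Prop :=
  ∀ᶠ Q : ℝ in atTop, ∃ p : Fin m → ℤ, ∃ q : Fin n → ℤ, q ≠ 0 ∧
    ‖(fun j => (q j : ℝ) : Fin n → ℝ)‖ ≤ Q ∧
    ‖(fun i => (∑ j, A i j * (q j : ℝ)) + (p i : ℝ) : Fin m → ℝ)‖ ≤ Q ^ (-ω)

section helpers

variable (m n : ℕ) (A : Matrix (Fin m) (Fin n) ℝ)

lemma gtuAVec_norm (t : ℝ) (p : Fin m → ℤ) (q : Fin n → ℤ) :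
    ‖gtuAVec m n A t p q‖ =
      max (Real.exp (t / m) * ‖(fun i => (p i : ℝ) + ∑ j, A i j * (q j : ℝ) : Fin m → ℝ)‖)
        (Real.exp (-t / n) * ‖(fun j => (q j : ℝ) : Fin n → ℝ)‖) := by
  rw [Prod.norm_def]
  congr 1
  · have h1 : (fun i => Real.exp (t / m) * ((p i : ℝ) + ∑ j, A i j * (q j : ℝ))) =
        Real.exp (t / m) • (fun i => (p i : ℝ) + ∑ j, A i j * (q j : ℝ)) := rfl
    show ‖(fun i => Real.exp (t / m) * ((p i : ℝ) + ∑ j, A i j * (q j : ℝ)) : Fin m → ℝ)‖ = _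
    rw [h1, norm_smul, Real.norm_eq_abs, Real.abs_exp]
  · have h2 : (fun j => Real.exp (-t / n) * (q j : ℝ)) =
        Real.exp (-t / n) • (fun j => (q j : ℝ)) := rfl
    show ‖(fun j => Real.exp (-t / n) * (q j : ℝ) : Fin n → ℝ)‖ = _
    rw [h2, norm_smul, Real.norm_eq_abs, Real.abs_exp]

lemma one_le_norm_int {k : ℕ} {q : Fin k → ℤ} (hq : q ≠ 0) :
    1 ≤ ‖(fun j => (q j : ℝ) : Fin k → ℝ)‖ := by
  obtain ⟨j, hj⟩ := Function.ne_iff.1 hq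
  have h1 : (1 : ℝ) ≤ ‖((q j : ℝ))‖ := by
    rw [Real.norm_eq_abs, ← Int.cast_abs]
    exact_mod_cast Int.one_le_abs hj
  exact h1.trans (norm_le_pi_norm (fun j => (q j : ℝ)) j)

lemma lambdaOne_bddBelow (t : ℝ) : BddBelow {r : ℝ | ∃ p : Fin m → ℤ, ∃ q : Fin n → ℤ,
    ¬(p = 0 ∧ q = 0) ∧ r = ‖gtuAVec m n A t p q‖} := by
  refine ⟨0, ?_⟩
  rintro r ⟨p, q, -, rfl⟩
  exact norm_nonneg _

lemma lambdaOne_set_nonempty (hm : 0 < m) (t : ℝ) :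
    {r : ℝ | ∃ p : Fin m → ℤ, ∃ q : Fin n → ℤ,
      ¬(p = 0 ∧ q = 0) ∧ r = ‖gtuAVec m n A t p q‖}.Nonempty := by
  refine ⟨‖gtuAVec m n A t (fun _ => 1) 0‖, fun _ => (1 : ℤ), 0, ?_, rfl⟩
  rintro ⟨hp, -⟩
  have := congrFun hp ⟨0, hm⟩
  simp at this

lemma lambdaOne_le (t : ℝ) (p : Fin m → ℤ) (q : Fin n → ℤ) (h : ¬(p = 0 ∧ q = 0)) :
    lambdaOne m n A t ≤ ‖gtuAVec m n A t p q‖ :=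
  csInf_le (lambdaOne_bddBelow m n A t) ⟨p, q, h, rfl⟩

lemma le_lambdaOne (hm : 0 < m) (t c : ℝ)
    (h : ∀ p : Fin m → ℤ, ∀ q : Fin n → ℤ, ¬(p = 0 ∧ q = 0) → c ≤ ‖gtuAVec m n A t p q‖) :
    c ≤ lambdaOne m n A t := by
  refine le_csInf (lambdaOne_set_nonempty m n A hm t) ?_
  rintro r ⟨p, q, hpq, rfl⟩
  exact h p q hpq

lemma exp_le_lambdaOne (hm : 0 < m) (t : ℝ) (ht : 0 ≤ t) :
    Real.exp (-t / n) ≤ lambdaOne m n A t := by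
  refine le_lambdaOne m n A hm t _ ?_
  intro p q hpq
  rw [gtuAVec_norm]
  by_cases hq : q = 0
  · have hp : p ≠ 0 := fun h => hpq ⟨h, hq⟩
    refine le_trans ?_ (le_max_left _ _)
    have h1 : (1 : ℝ) ≤ ‖(fun i => (p i : ℝ) + ∑ j, A i j * (q j : ℝ) : Fin m → ℝ)‖ := by
      have : (fun i => (p i : ℝ) + ∑ j, A i j * (q j : ℝ)) = (fun i => (p i : ℝ)) := by
        funext i; simp [hq]
      rw [this]
      exact one_le_norm_int hp
    calc Real.exp (-t / n) ≤ Real.exp (t / m) := by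
          apply Real.exp_le_exp.2
          have h2 : -t / n ≤ 0 := div_nonpos_of_nonpos_of_nonneg (by linarith) (Nat.cast_nonneg n)
          have h3 : (0:ℝ) ≤ t / m := div_nonneg ht (Nat.cast_nonneg m)
          linarith
      _ ≤ _ := le_mul_of_one_le_right (Real.exp_pos _).le h1
  · refine le_trans ?_ (le_max_right _ _)
    exact le_mul_of_one_le_right (Real.exp_pos _).le (one_le_norm_int hq)

lemma lambdaOne_pos (hm : 0 < m) (t : ℝ) (ht : 0 ≤ t) : 0 < lambdaOne m n A t :=
  lt_of_lt_of_le (Real.exp_pos _) (exp_le_lambdaOne m n A hm t ht)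

lemma lambdaOne_le_exp (hm : 0 < m) (t : ℝ) : lambdaOne m n A t ≤ Real.exp (t / m) := by
  have h := lambdaOne_le m n A t (fun _ => 1) 0 (by
    rintro ⟨hp, -⟩
    have := congrFun hp ⟨0, hm⟩
    simp at this)
  refine h.trans ?_
  rw [gtuAVec_norm]
  refine max_le ?_ ?_
  · have h1 : ‖(fun i => ((fun _ => (1:ℤ)) i : ℝ) + ∑ j, A i j * (((0 : Fin n → ℤ)) j : ℝ) :
        Fin m → ℝ)‖ ≤ 1 := by
      rw [pi_norm_le_iff_of_nonneg zero_le_one]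
      intro i
      simp
    calc Real.exp (t / m) * _ ≤ Real.exp (t / m) * 1 :=
          mul_le_mul_of_nonneg_left h1 (Real.exp_pos _).le
      _ = _ := mul_one _
  · have h2 : ‖(fun j => (((0 : Fin n → ℤ)) j : ℝ) : Fin n → ℝ)‖ = 0 := by
      have : (fun j => (((0 : Fin n → ℤ)) j : ℝ) : Fin n → ℝ) = 0 := by funext j; simp
      rw [this, norm_zero]
    rw [h2, mul_zero]
    exact (Real.exp_pos _).le

lemma uFun_bounds (hm : 0 < m) (hn : 0 < n) :
    ∀ᶠ t : ℝ in atTop, -(1/(m:ℝ)) ≤ -Real.log (lambdaOne m n A t) / t ∧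
      -Real.log (lambdaOne m n A t) / t ≤ 1/(n:ℝ) := by
  filter_upwards [eventually_gt_atTop (0:ℝ)] with t ht
  have hpos := lambdaOne_pos m n A hm t ht.le
  have hup := lambdaOne_le_exp m n A hm t
  have hlo := exp_le_lambdaOne m n A hm t ht.le
  have hl : -t / n ≤ Real.log (lambdaOne m n A t) := (Real.le_log_iff_exp_le hpos).2 hlo
  have hu : Real.log (lambdaOne m n A t) ≤ t / m := (Real.log_le_iff_le_exp hpos).2 hup
  constructor
  · rw [le_div_iff₀ ht]
    have : -(1/(m:ℝ)) * t = -(t/m) := by ring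
    linarith
  · rw [div_le_iff₀ ht]
    have : (1/(n:ℝ)) * t = -(-t/n) := by ring
    linarith

lemma uBddAbove (hm : 0 < m) (hn : 0 < n) :
    IsBoundedUnder (· ≤ ·) atTop (fun t : ℝ => -Real.log (lambdaOne m n A t) / t) :=
  ⟨1/(n:ℝ), eventually_map.2 ((uFun_bounds m n A hm hn).mono fun t h => h.2)⟩

lemma uBddBelow (hm : 0 < m) (hn : 0 < n) :
    IsBoundedUnder (· ≥ ·) atTop (fun t : ℝ => -Real.log (lambdaOne m n A t) / t) :=
  ⟨-(1/(m:ℝ)), eventually_map.2 ((uFun_bounds m n A hm hn).mono fun t h => h.1)⟩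

lemma tauHat_le_inv_n (hm : 0 < m) (hn : 0 < n) : tauHat m n A ≤ 1/(n:ℝ) :=
  liminf_le_of_frequently_le
    (((uFun_bounds m n A hm hn).mono fun t h => h.2).frequently)
    (uBddBelow m n A hm hn)

lemma uniformApprox_mono (ω ω' : ℝ) (hle : ω' ≤ ω) (h : uniformApprox m n A ω) :
    uniformApprox m n A ω' := by
  filter_upwards [h, eventually_ge_atTop (1:ℝ)] with Q hQ hQ1
  obtain ⟨p, q, h0, h1, h2⟩ := hQ
  exact ⟨p, q, h0, h1, h2.trans (Real.rpow_le_rpow_of_exponent_le hQ1 (neg_le_neg hle))⟩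

lemma uniformApprox_zero (hn : 0 < n) : uniformApprox m n A 0 := by
  filter_upwards [eventually_ge_atTop (1:ℝ)] with Q hQ
  set q : Fin n → ℤ := fun j => if j = ⟨0, hn⟩ then 1 else 0 with hqdef
  refine ⟨fun i => -round (∑ j, A i j * (q j : ℝ)), q, ?_, ?_, ?_⟩
  · intro h
    have := congrFun h ⟨0, hn⟩
    simp [hqdef] at this
  · rw [pi_norm_le_iff_of_nonneg (by linarith)]
    intro j
    rw [Real.norm_eq_abs]
    by_cases hj : j = ⟨0, hn⟩ <;> simp [hqdef, hj] <;> linarith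
  · rw [neg_zero, Real.rpow_zero, pi_norm_le_iff_of_nonneg zero_le_one]
    intro i
    rw [Real.norm_eq_abs]
    push_cast
    have := abs_sub_round (∑ j, A i j * (q j : ℝ))
    have heq : (∑ j, A i j * (q j : ℝ)) + -(round (∑ j, A i j * (q j : ℝ)) : ℝ) =
        (∑ j, A i j * (q j : ℝ)) - round (∑ j, A i j * (q j : ℝ)) := by ring
    rw [heq]
    linarith

end helpers

section directions

variable (m n : ℕ) (A : Matrix (Fin m) (Fin n) ℝ)

lemma dir1 (hm : 0 < m) (hn : 0 < n) (ω : ℝ) (hω : 0 ≤ ω) (h : uniformApprox m n A ω) :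
    (1/(n:ℝ)) * ((ω - (n:ℝ)/(m:ℝ))/(ω+1)) ≤ tauHat m n A := by
  have hm' : (0:ℝ) < m := Nat.cast_pos.2 hm
  have hn' : (0:ℝ) < n := Nat.cast_pos.2 hn
  have hω1 : (0:ℝ) < ω + 1 := by linarith
  set c : ℝ := ((m:ℝ)+n)/((m:ℝ)*n*(ω+1)) with hc
  have hcpos : 0 < c := by positivity
  have htend : Tendsto (fun t : ℝ => Real.exp (t*c)) atTop atTop :=
    Real.tendsto_exp_atTop.comp (tendsto_id.atTop_mul_const hcpos)
  have hev := htend.eventually h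
  set τ : ℝ := (1/(n:ℝ)) * ((ω - (n:ℝ)/(m:ℝ))/(ω+1)) with hτ
  refine le_liminf_of_le (IsBoundedUnder.isCoboundedUnder_ge (uBddAbove m n A hm hn)) ?_
  filter_upwards [hev, eventually_gt_atTop (0:ℝ)] with t hPt ht
  obtain ⟨p, q, hq0, hqle, hwle⟩ := hPt
  have hrpow : Real.exp (t*c) ^ (-ω) = Real.exp ((t*c) * (-ω)) := by
    rw [Real.rpow_def_of_pos (Real.exp_pos _), Real.log_exp]
  have hkey : lambdaOne m n A t ≤ Real.exp (-(τ*t)) := by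
    refine le_trans (lambdaOne_le m n A t p q (fun hc' => hq0 hc'.2)) ?_
    rw [gtuAVec_norm]
    apply max_le
    · have hww : (fun i => (p i:ℝ) + ∑ j, A i j * (q j : ℝ)) =
          (fun i => (∑ j, A i j * (q j : ℝ)) + (p i:ℝ)) := by funext i; ring
      rw [hww]
      calc Real.exp (t/m) * ‖(fun i => (∑ j, A i j * (q j : ℝ)) + (p i:ℝ) : Fin m → ℝ)‖
          ≤ Real.exp (t/m) * Real.exp (t*c) ^ (-ω) :=
            mul_le_mul_of_nonneg_left hwle (Real.exp_pos _).le
        _ = Real.exp (t/m + (t*c)*(-ω)) := by rw [hrpow, ← Real.exp_add]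
        _ = Real.exp (-(τ*t)) := by
            congr 1
            rw [hτ, hc]
            field_simp
            ring
    · calc Real.exp (-t/n) * ‖(fun j => (q j : ℝ) : Fin n → ℝ)‖
          ≤ Real.exp (-t/n) * Real.exp (t*c) :=
            mul_le_mul_of_nonneg_left hqle (Real.exp_pos _).le
        _ = Real.exp (-t/n + t*c) := by rw [← Real.exp_add]
        _ = Real.exp (-(τ*t)) := by
            congr 1
            rw [hτ, hc]
            field_simp
            ring
  have hpos := lambdaOne_pos m n A hm t ht.le
  have hlog : Real.log (lambdaOne m n A t) ≤ -(τ*t) := (Real.log_le_iff_le_exp hpos).2 hkey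
  rw [le_div_iff₀ ht]
  linarith

lemma dir2 (hm : 0 < m) (hn : 0 < n) (τ : ℝ) (h1 : -(1/(m:ℝ)) < τ) (h2 : τ < 1/(n:ℝ))
    (h : ∀ᶠ t : ℝ in atTop, lambdaOne m n A t < Real.exp (-(τ*t))) :
    uniformApprox m n A ((1/(m:ℝ) + τ)/(1/(n:ℝ) - τ)) := by
  have hm' : (0:ℝ) < m := Nat.cast_pos.2 hm
  have hn' : (0:ℝ) < n := Nat.cast_pos.2 hn
  have hd : (0:ℝ) < 1/(n:ℝ) - τ := by linarith
  have htend : Tendsto (fun Q : ℝ => Real.log Q / (1/(n:ℝ) - τ)) atTop atTop :=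
    Real.tendsto_log_atTop.atTop_div_const hd
  filter_upwards [htend.eventually h, eventually_gt_atTop (1:ℝ)] with Q hQ hQ1
  set t : ℝ := Real.log Q / (1/(n:ℝ) - τ) with htdef
  have hQ0 : (0:ℝ) < Q := by linarith
  have hlogQ : 0 < Real.log Q := Real.log_pos hQ1
  have ht : 0 < t := div_pos hlogQ hd
  obtain ⟨r, ⟨p, q, hpq, rfl⟩, hr⟩ :=
    exists_lt_of_csInf_lt (lambdaOne_set_nonempty m n A hm t) hQ
  rw [gtuAVec_norm] at hr
  have hr1 : Real.exp (t/m) * ‖(fun i => (p i:ℝ) + ∑ j, A i j * (q j : ℝ) : Fin m → ℝ)‖ <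
      Real.exp (-(τ*t)) := (le_max_left _ _).trans_lt hr
  have hr2 : Real.exp (-t/n) * ‖(fun j => (q j : ℝ) : Fin n → ℝ)‖ < Real.exp (-(τ*t)) :=
    (le_max_right _ _).trans_lt hr
  have hq0 : q ≠ 0 := by
    intro hq
    have hp : p ≠ 0 := fun h' => hpq ⟨h', hq⟩
    have hone : (1:ℝ) ≤ ‖(fun i => (p i:ℝ) + ∑ j, A i j * (q j : ℝ) : Fin m → ℝ)‖ := by
      have : (fun i => (p i:ℝ) + ∑ j, A i j * (q j : ℝ)) = (fun i => (p i : ℝ)) := by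
        funext i; simp [hq]
      rw [this]
      exact one_le_norm_int hp
    have hge : Real.exp (t/m) ≤ Real.exp (t/m) *
        ‖(fun i => (p i:ℝ) + ∑ j, A i j * (q j : ℝ) : Fin m → ℝ)‖ :=
      le_mul_of_one_le_right (Real.exp_pos _).le hone
    have hcmp : Real.exp (-(τ*t)) ≤ Real.exp (t/m) := by
      apply Real.exp_le_exp.2
      have hlt := mul_lt_mul_of_pos_right h1 ht
      have he : -(1/(m:ℝ)) * t = -(t/(m:ℝ)) := by ring
      rw [he] at hlt
      linarith
    linarith
  refine ⟨p, q, hq0, ?_, ?_⟩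
  · rw [mul_comm] at hr2
    have hx : ‖(fun j => (q j : ℝ) : Fin n → ℝ)‖ < Real.exp (-(τ*t)) / Real.exp (-t/n) :=
      (lt_div_iff₀ (Real.exp_pos _)).2 hr2
    rw [← Real.exp_sub] at hx
    have hid : -(τ*t) - (-t/n) = Real.log Q := by
      have e1 : -(τ*t) - (-t/n) = t * (1/(n:ℝ) - τ) := by ring
      rw [e1, htdef, div_mul_cancel₀ _ hd.ne']
    rw [hid, Real.exp_log hQ0] at hx
    exact hx.le
  · have hww : (fun i => (∑ j, A i j * (q j : ℝ)) + (p i:ℝ)) =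
        (fun i => (p i:ℝ) + ∑ j, A i j * (q j : ℝ)) := by funext i; ring
    rw [hww]
    rw [mul_comm] at hr1
    have hx : ‖(fun i => (p i:ℝ) + ∑ j, A i j * (q j : ℝ) : Fin m → ℝ)‖ <
        Real.exp (-(τ*t)) / Real.exp (t/m) :=
      (lt_div_iff₀ (Real.exp_pos _)).2 hr1
    rw [← Real.exp_sub] at hx
    have hid : -(τ*t) - t/m = Real.log Q * (-((1/(m:ℝ) + τ)/(1/(n:ℝ) - τ))) := by
      rw [htdef]
      ring
    rw [hid] at hx
    rw [Real.rpow_def_of_pos hQ0]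
    exact hx.le

end directions

/-- Dani correspondence for very singular matrices: `A` is very singular
(`ω̂(A) > n/m`) iff `τ̂(A) > 0`; moreover if `ω̂(A) = ω` (as a least upper bound) then
`τ̂(A) = (1/n)·(ω - n/m)/(ω + 1)`. -/
theorem very_singular_iff_tauHat_pos (m n : ℕ) (hm : 0 < m) (hn : 0 < n)
    (A : Matrix (Fin m) (Fin n) ℝ) :
    ((∃ ω : ℝ, (n : ℝ) / (m : ℝ) < ω ∧ uniformApprox m n A ω) ↔ 0 < tauHat m n A) ∧
    (∀ ω : ℝ, IsLUB {ω' : ℝ | uniformApprox m n A ω'} ω →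
      tauHat m n A = (1 / (n : ℝ)) * ((ω - (n : ℝ) / (m : ℝ)) / (ω + 1))) := by
  have hm' : (0:ℝ) < m := Nat.cast_pos.2 hm
  have hn' : (0:ℝ) < n := Nat.cast_pos.2 hn
  have hnm : (0:ℝ) < (n:ℝ)/(m:ℝ) := div_pos hn' hm'
  have hconv : ∀ τ' : ℝ, τ' < tauHat m n A →
      ∀ᶠ t : ℝ in atTop, lambdaOne m n A t < Real.exp (-(τ'*t)) := by
    intro τ' hτ'
    have hev := eventually_lt_of_lt_liminf hτ' (uBddBelow m n A hm hn)
    filter_upwards [hev, eventually_gt_atTop (0:ℝ)] with t hlt ht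
    have hpos := lambdaOne_pos m n A hm t ht.le
    rw [lt_div_iff₀ ht] at hlt
    rw [← Real.exp_log hpos]
    exact Real.exp_lt_exp.2 (by linarith)
  constructor
  · constructor
    · rintro ⟨ω, hω, hωA⟩
      have h0ω : (0:ℝ) ≤ ω := le_of_lt (lt_trans hnm hω)
      have hτ := dir1 m n A hm hn ω h0ω hωA
      refine lt_of_lt_of_le ?_ hτ
      apply mul_pos (by positivity)
      exact div_pos (by linarith) (by linarith)
    · intro hpos
      set τ' := tauHat m n A / 2 with hτ'def
      have hτ'pos : 0 < τ' := half_pos hpos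
      have hτ'lt : τ' < tauHat m n A := half_lt_self hpos
      have h2 : τ' < 1/(n:ℝ) := lt_of_lt_of_le hτ'lt (tauHat_le_inv_n m n A hm hn)
      have h1 : -(1/(m:ℝ)) < τ' := by
        have : (0:ℝ) < 1/(m:ℝ) := by positivity
        linarith
      have hUA := dir2 m n A hm hn τ' h1 h2 (hconv τ' hτ'lt)
      refine ⟨_, ?_, hUA⟩
      have hd : (0:ℝ) < 1/(n:ℝ) - τ' := by linarith
      rw [lt_div_iff₀ hd]
      have e1 : (n:ℝ)/m * (1/(n:ℝ)) = 1/(m:ℝ) := by field_simp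
      have e2 : (n:ℝ)/m * (1/(n:ℝ) - τ') = 1/(m:ℝ) - (n:ℝ)/m * τ' := by rw [mul_sub, e1]
      rw [e2]
      nlinarith [mul_pos hnm hτ'pos]
  · intro ω hLUB
    have h0mem : uniformApprox m n A 0 := uniformApprox_zero m n A hn
    have h0ω : (0:ℝ) ≤ ω := hLUB.1 h0mem
    set F : ℝ := (1/(n:ℝ)) * ((ω - (n:ℝ)/(m:ℝ))/(ω+1)) with hF
    have hω1 : (0:ℝ) < ω + 1 := by linarith
    refine le_antisymm ?_ ?_
    · by_contra hcon
      push_neg at hcon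
      have hFub : F < 1/(n:ℝ) := by
        rw [hF]
        have hlt1 : (ω - (n:ℝ)/m)/(ω+1) < 1 := (div_lt_one hω1).2 (by linarith)
        calc (1/(n:ℝ)) * ((ω - (n:ℝ)/m)/(ω+1)) < (1/(n:ℝ)) * 1 :=
              mul_lt_mul_of_pos_left hlt1 (by positivity)
          _ = 1/(n:ℝ) := mul_one _
      have hFlb : -(1/(m:ℝ)) ≤ F := by
        have e : F + 1/(m:ℝ) = (((m:ℝ)+n)*ω)/(((m:ℝ)*n)*(ω+1)) := by
          rw [hF]; field_simp; ring
        have h0 : 0 ≤ (((m:ℝ)+n)*ω)/(((m:ℝ)*n)*(ω+1)) :=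
          div_nonneg (mul_nonneg (by positivity) h0ω) (by positivity)
        linarith
      set τ' := (F + tauHat m n A)/2 with hτ'def
      have hτa : F < τ' := by rw [hτ'def]; linarith
      have hτb : τ' < tauHat m n A := by rw [hτ'def]; linarith
      have h2 : τ' < 1/(n:ℝ) := by
        have := tauHat_le_inv_n m n A hm hn
        linarith
      have h1 : -(1/(m:ℝ)) < τ' := by linarith
      have hUA := dir2 m n A hm hn τ' h1 h2 (hconv τ' hτb)
      have hle : (1/(m:ℝ) + τ')/(1/(n:ℝ) - τ') ≤ ω := hLUB.1 hUA
      have hd : (0:ℝ) < 1/(n:ℝ) - τ' := by linarith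
      have hgt : ω < (1/(m:ℝ) + τ')/(1/(n:ℝ) - τ') := by
        rw [lt_div_iff₀ hd]
        have hid : F*(ω+1) = ω/(n:ℝ) - 1/(m:ℝ) := by rw [hF]; field_simp
        have hmul : F*(ω+1) < τ'*(ω+1) := mul_lt_mul_of_pos_right hτa hω1
        rw [hid] at hmul
        have e2 : ω * (1/(n:ℝ) - τ') = ω/(n:ℝ) - ω*τ' := by ring
        rw [e2]
        linarith
      linarith
    · refine le_of_forall_pos_le_add ?_
      intro ε hε
      set K : ℝ := (1 + (n:ℝ)/m)/n with hKdef
      have hK : 0 < K := by positivity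
      set ω' : ℝ := max 0 (ω - ε/K) with hω'def
      have hω'0 : 0 ≤ ω' := le_max_left _ _
      have hω'le : ω' ≤ ω := max_le h0ω (by linarith [div_pos hε hK])
      have hωω' : ω - ω' ≤ ε/K := by
        have := le_max_right 0 (ω - ε/K)
        rw [hω'def]
        linarith
      have hmem : uniformApprox m n A ω' := by
        by_cases hc : ω - ε/K ≤ 0
        · have : ω' = 0 := by rw [hω'def, max_eq_left hc]
          rw [this]
          exact h0mem
        · push_neg at hc
          have hlt : ω' < ω := by
            rw [hω'def, max_eq_right hc.le]
            linarith [div_pos hε hK]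
          obtain ⟨x, hxS, hx⟩ := hLUB.exists_between hlt
          exact uniformApprox_mono m n A x ω' (le_of_lt hx.1) hxS
      have hdir := dir1 m n A hm hn ω' hω'0 hmem
      have hω'1 : (0:ℝ) < ω' + 1 := by linarith
      have hdiff : F - (1/(n:ℝ)) * ((ω' - (n:ℝ)/m)/(ω'+1)) = K*(ω - ω')/((ω+1)*(ω'+1)) := by
        rw [hF, hKdef]; field_simp; ring
      have hKle : K*(ω-ω') ≤ ε := by
        calc K*(ω-ω') ≤ K*(ε/K) := mul_le_mul_of_nonneg_left hωω' hK.le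
          _ = ε := by field_simp
      have hden : 1 ≤ (ω+1)*(ω'+1) := by nlinarith
      have hfin : K*(ω - ω')/((ω+1)*(ω'+1)) ≤ ε :=
        le_trans (div_le_self (mul_nonneg hK.le (by linarith)) hden) hKle
      linarith
end

section
/- Fix 0 < β < 1 and a positive integer D. Suppose in the D-dimensional Hausdorff game Alice plays a winning strategy guaranteeing score δ, and on each turn k Bob chooses the center x_k ∈ A_k uniformly at random (independently over turns), producing the outcome measure μ on the resulting Cantor set C. Then for every x ∈ C, the lower pointwise dimension satisfies liminf_{ρ→0} log μ(B(x,ρ))/log ρ ≥ δ. Consequently the Hausdorff dimension of C is at least δ. -/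
open Filter MeasureTheory
open scoped Topology ENNReal NNReal

/-- The history of Bob's first `k` choices. -/
def gameHist {E : Type*} (x : ℕ → E) (k : ℕ) : List E :=
  List.ofFn (fun i : Fin k => x i)

/-- A play of the game against Alice's strategy `σ`: on turn `k`, Bob's choice `x k`
belongs to the set `σ(history)` offered by Alice. -/
def IsPlay {E : Type*} (σ : List E → Finset E) (x : ℕ → E) : Prop :=
  ∀ k, x k ∈ σ (gameHist x k)

/- ---------- Auxiliary lemmas ---------- -/

lemma liminf_ge_aux {α : Type*} {f : α → ℝ} {l : Filter α} {δ : ℝ}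
    (h1 : ∀ b < δ, ∀ᶠ x in l, b ≤ f x)
    (h2 : δ ≤ 0 ∨ ∃ B, ∃ᶠ x in l, f x ≤ B) :
    δ ≤ liminf f l := by
  rw [liminf_eq]
  set S := {a : ℝ | ∀ᶠ x in l, a ≤ f x} with hS
  by_cases hb : BddAbove S
  · by_contra hlt
    push_neg at hlt
    obtain ⟨b, hb1, hb2⟩ := exists_between hlt
    exact absurd (le_csSup hb (h1 b hb2)) (not_le.2 hb1)
  · rw [Real.sSup_of_not_bddAbove hb]
    rcases h2 with h | ⟨B, hB⟩
    · exact h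
    · exfalso
      apply hb
      refine ⟨B, fun a ha => ?_⟩
      rcases (hB.and_eventually ha).exists with ⟨x, hx1, hx2⟩
      exact hx2.trans hx1

lemma of_liminf_ge {α : Type*} {g : α → ℝ} {l : Filter α} [l.NeBot] {δ : ℝ}
    (hδ : 0 < δ) (h : δ ≤ liminf g l) :
    (∀ b < δ, ∀ᶠ x in l, b ≤ g x) ∧ ∃ B, ∃ᶠ x in l, g x ≤ B := by
  rw [liminf_eq] at h
  set S := {a : ℝ | ∀ᶠ x in l, a ≤ g x} with hS
  have hb : BddAbove S := by
    by_contra hb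
    rw [Real.sSup_of_not_bddAbove hb] at h
    exact absurd h (not_le.2 hδ)
  have hne : S.Nonempty := by
    by_contra hne
    rw [Set.not_nonempty_iff_eq_empty] at hne
    rw [hne, Real.sSup_empty] at h
    exact absurd h (not_le.2 hδ)
  constructor
  · intro b hbδ
    obtain ⟨a, haS, hba⟩ := exists_lt_of_lt_csSup hne (lt_of_lt_of_le hbδ h)
    exact haS.mono fun x hx => hba.le.trans hx
  · obtain ⟨M, hM⟩ := hb
    refine ⟨M + 1, ?_⟩
    by_contra hc
    rw [not_frequently] at hc
    have : (M + 1 : ℝ) ∈ S := hc.mono fun x hx => (not_le.1 hx).le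
    linarith [hM this]

lemma gameHist_len {E : Type*} (x : ℕ → E) (k : ℕ) : (gameHist x k).length = k := by
  simp [gameHist]

lemma gameHist_succ {E : Type*} (x : ℕ → E) (k : ℕ) :
    gameHist x (k + 1) = gameHist x k ++ [x k] := by
  rw [gameHist, List.ofFn_succ']
  simp only [List.concat_eq_append, Fin.last, Fin.coe_castSucc]
  rfl

/-- Separation across plays: nearby stage-k choices coincide, with equal histories. -/
lemma game_sep {E : Type*} [MetricSpace E] {β ρ₀ : ℝ}
    (hβ0 : 0 < β) (hβ1 : β < 1) (hρ : 0 < ρ₀)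
    {σ : List E → Finset E}
    (hsep : ∀ h : List E, ∀ a ∈ σ h, ∀ b ∈ σ h, a ≠ b → 3 * (β ^ h.length * ρ₀) ≤ dist a b)
    (hcontain : ∀ x : ℕ → E, IsPlay σ x → ∀ k : ℕ,
      ∀ a ∈ σ (gameHist x (k + 1)), a ∈ Metric.closedBall (x k) ((1 - β) * (β ^ k * ρ₀))) :
    ∀ k (x x' : ℕ → E), IsPlay σ x → IsPlay σ x' →
      dist (x k) (x' k) < 3 * (β ^ k * ρ₀) → gameHist x (k + 1) = gameHist x' (k + 1) := by
  intro k
  induction k with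
  | zero =>
    intro x x' hx hx' hd
    have h0 : gameHist x 0 = gameHist x' 0 := by simp [gameHist]
    have hx0 := hx 0
    have hx'0 := hx' 0
    rw [h0] at hx0
    have : x 0 = x' 0 := by
      by_contra hne
      have := hsep _ _ hx0 _ hx'0 hne
      rw [gameHist_len] at this
      simp only [pow_zero] at this hd
      linarith
    rw [gameHist_succ, gameHist_succ, h0, this]
  | succ k ih =>
    intro x x' hx hx' hd
    have hxk : x (k+1) ∈ Metric.closedBall (x k) ((1 - β) * (β ^ k * ρ₀)) :=
      hcontain x hx k _ (hx (k+1))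
    have hx'k : x' (k+1) ∈ Metric.closedBall (x' k) ((1 - β) * (β ^ k * ρ₀)) :=
      hcontain x' hx' k _ (hx' (k+1))
    rw [Metric.mem_closedBall] at hxk hx'k
    have hpow : (0:ℝ) < β ^ k * ρ₀ := by positivity
    have hdk : dist (x k) (x' k) < 3 * (β ^ k * ρ₀) := by
      have h1 : dist (x k) (x' k) ≤
          dist (x k) (x (k+1)) + dist (x (k+1)) (x' (k+1)) + dist (x' (k+1)) (x' k) :=
        dist_triangle4 _ _ _ _
      have h2 : dist (x k) (x (k+1)) ≤ (1 - β) * (β ^ k * ρ₀) := by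
        rw [dist_comm]; exact hxk
      have h3 : dist (x' (k+1)) (x' k) ≤ (1 - β) * (β ^ k * ρ₀) := hx'k
      have h4 : dist (x (k+1)) (x' (k+1)) < 3 * β * (β ^ k * ρ₀) := by
        have : 3 * (β ^ (k+1) * ρ₀) = 3 * β * (β ^ k * ρ₀) := by ring
        linarith [hd.trans_le (le_of_eq this)]
      nlinarith
    have hhist := ih x x' hx hx' hdk
    have hxm : x (k+1) ∈ σ (gameHist x (k+1)) := hx (k+1)
    have hx'm : x' (k+1) ∈ σ (gameHist x (k+1)) := by rw [hhist]; exact hx' (k+1)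
    have heq : x (k+1) = x' (k+1) := by
      by_contra hne
      have := hsep _ _ hxm _ hx'm hne
      rw [gameHist_len] at this
      linarith
    rw [gameHist_succ x (k+1), gameHist_succ x' (k+1), hhist, heq]

lemma gameHist_eq_apply {E : Type*} {x x' : ℕ → E} {k : ℕ}
    (h : gameHist x (k + 1) = gameHist x' (k + 1)) : x k = x' k := by
  have h' : (fun i : Fin (k+1) => x i) = fun i : Fin (k+1) => x' i := by
    rwa [← List.ofFn_inj]
  exact congrFun h' ⟨k, k.lt_succ_self⟩

lemma exists_step {β ρ₀ ρ : ℝ} (hβ0 : 0 < β) (hβ1 : β < 1) (hρ : 0 < ρ₀)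
    (h0 : 0 < ρ) (h1 : ρ < ρ₀) : ∃ k, β ^ (k+1) * ρ₀ ≤ ρ ∧ ρ < β ^ k * ρ₀ := by
  have htend : Tendsto (fun k : ℕ => β ^ k * ρ₀) atTop (𝓝 0) := by
    simpa using (tendsto_pow_atTop_nhds_zero_of_lt_one hβ0.le hβ1).mul_const ρ₀
  have hex : ∃ n : ℕ, β ^ n * ρ₀ ≤ ρ := by
    obtain ⟨n, hn⟩ := (htend.eventually_lt_const h0).exists
    exact ⟨n, hn.le⟩
  classical
  have hspec := Nat.find_spec hex
  have hn0 : Nat.find hex ≠ 0 := by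
    intro h
    rw [h, pow_zero, one_mul] at hspec
    linarith
  obtain ⟨k, hk⟩ := Nat.exists_eq_succ_of_ne_zero hn0
  refine ⟨k, ?_, ?_⟩
  · rw [← Nat.succ_eq_add_one, ← hk]; exact hspec
  · have := Nat.find_min hex (m := k) (by omega)
    exact not_le.1 this

set_option maxHeartbeats 1600000 in
/-- Hausdorff-game lower bound: if Alice plays a winning strategy `σ` in the
`β`-game (with initial radius `ρ₀`, radii `ρ_k = β^k ρ₀`, each move a nonempty
`3ρ_k`-separated finite set contained in `B(x_{k-1},(1-β)ρ_{k-1})`) guaranteeing score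
`≥ δ`, and Bob chooses uniformly at random producing the outcome measure `μ` on the
Cantor set `C` of possible outcomes (so that `μ(B(x_k,ρ_k)) = (∏_{i≤k} #A_i)⁻¹` along
every play), then every `y ∈ C` has lower pointwise dimension `≥ δ`, and hence
`dimH C ≥ δ`. -/
theorem hausdorff_game_lower_bound (D : ℕ) (hD : 0 < D) (β ρ₀ δ : ℝ)
    (hβ0 : 0 < β) (hβ1 : β < 1) (hρ : 0 < ρ₀)
    (σ : List (EuclideanSpace ℝ (Fin D)) → Finset (EuclideanSpace ℝ (Fin D)))
    (hne : ∀ h, (σ h).Nonempty)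
    (hsep : ∀ h : List (EuclideanSpace ℝ (Fin D)),
      ∀ a ∈ σ h, ∀ b ∈ σ h, a ≠ b → 3 * (β ^ h.length * ρ₀) ≤ dist a b)
    (hcontain : ∀ x : ℕ → EuclideanSpace ℝ (Fin D), IsPlay σ x → ∀ k : ℕ,
      ∀ a ∈ σ (gameHist x (k + 1)),
        a ∈ Metric.closedBall (x k) ((1 - β) * (β ^ k * ρ₀)))
    (hscore : ∀ x : ℕ → EuclideanSpace ℝ (Fin D), IsPlay σ x →
      δ ≤ liminf (fun k : ℕ =>
        (1 / (k : ℝ)) * ∑ i ∈ Finset.range (k + 1),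
          Real.log ((σ (gameHist x i)).card) / (-Real.log β)) atTop)
    (C : Set (EuclideanSpace ℝ (Fin D)))
    (hC : C = {y | ∃ x : ℕ → EuclideanSpace ℝ (Fin D), IsPlay σ x ∧
      ∀ k : ℕ, y ∈ Metric.closedBall (x k) (β ^ k * ρ₀)})
    (μ : Measure (EuclideanSpace ℝ (Fin D))) [IsProbabilityMeasure μ]
    (hμsupp : μ Cᶜ = 0)
    (hμ : ∀ x : ℕ → EuclideanSpace ℝ (Fin D), IsPlay σ x → ∀ k : ℕ,
      μ (Metric.closedBall (x k) (β ^ k * ρ₀)) =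
        (∏ i ∈ Finset.range (k + 1), ((σ (gameHist x i)).card : ENNReal))⁻¹) :
    (∀ y ∈ C, δ ≤ liminf
        (fun ρ : ℝ => Real.log (μ (Metric.closedBall y ρ)).toReal / Real.log ρ)
        (nhdsWithin 0 (Set.Ioi 0))) ∧
    ENNReal.ofReal δ ≤ dimH C := by
  classical
  have hlogβ : Real.log β < 0 := Real.log_neg hβ0 hβ1
  set c : ℝ := -Real.log β with hc_def
  have hc : 0 < c := by rw [hc_def]; linarith
  have hcβ : Real.log β = -c := by rw [hc_def]; ring
  have hsepall := game_sep hβ0 hβ1 hρ hsep hcontain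
  have hpowpos : ∀ k : ℕ, (0:ℝ) < β ^ k * ρ₀ := fun k => by positivity
  have htend : Tendsto (fun k : ℕ => β ^ k * ρ₀) atTop (𝓝 0) := by
    simpa using (tendsto_pow_atTop_nhds_zero_of_lt_one hβ0.le hβ1).mul_const ρ₀
  have key : ∀ y ∈ C,
      (δ ≤ liminf
        (fun ρ : ℝ => Real.log (μ (Metric.closedBall y ρ)).toReal / Real.log ρ)
        (nhdsWithin 0 (Set.Ioi 0))) ∧
      (∀ ρ : ℝ, 0 < ρ → 0 < μ (Metric.closedBall y ρ)) := by
    intro y hy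
    rw [hC] at hy
    obtain ⟨x, hplay, hyx⟩ := hy
    have hyxd : ∀ k, dist y (x k) ≤ β ^ k * ρ₀ := fun k => Metric.mem_closedBall.1 (hyx k)
    set P : ℕ → ℝ≥0∞ :=
      fun k => ∏ i ∈ Finset.range (k + 1), ((σ (gameHist x i)).card : ℝ≥0∞) with hP
    set S : ℕ → ℝ :=
      fun k => ∑ i ∈ Finset.range (k + 1), Real.log ((σ (gameHist x i)).card) with hSdef
    have hcard : ∀ l, (σ l).card ≠ 0 := fun l => (Finset.card_pos.2 (hne l)).ne'
    have hPne0 : ∀ k, P k ≠ 0 := by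
      intro k
      rw [hP, Finset.prod_ne_zero_iff]
      intro i _
      exact_mod_cast hcard _
    have hPtop : ∀ k, P k ≠ ∞ := by
      intro k
      rw [hP]
      exact (ENNReal.prod_lt_top fun i _ => ENNReal.natCast_lt_top _).ne
    have hμk : ∀ k, μ (Metric.closedBall (x k) (β ^ k * ρ₀)) = (P k)⁻¹ := by
      intro k
      simp only [hP]
      exact hμ x hplay k
    have hS0 : ∀ k, 0 ≤ S k := by
      intro k
      apply Finset.sum_nonneg
      intro i _
      apply Real.log_nonneg
      have := Nat.one_le_iff_ne_zero.2 (hcard (gameHist x i))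
      exact_mod_cast this
    have hPlog : ∀ k, Real.log ((P k)⁻¹).toReal = -(S k) := by
      intro k
      rw [ENNReal.toReal_inv, Real.log_inv]
      congr 1
      rw [hP, ENNReal.toReal_prod, Real.log_prod]
      · simp [hSdef, ENNReal.toReal_natCast]
      · intro i _
        simp only [ENNReal.toReal_natCast]
        exact_mod_cast hcard _
    have hPinvpos : ∀ k, 0 < ((P k)⁻¹).toReal := fun k =>
      ENNReal.toReal_pos (ENNReal.inv_ne_zero.2 (hPtop k)) (ENNReal.inv_ne_top.2 (hPne0 k))
    have factA : ∀ (k : ℕ) (ρ : ℝ), 0 < ρ → ρ < β ^ k * ρ₀ →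
        μ (Metric.closedBall y ρ) ≤ (P k)⁻¹ := by
      intro k ρ hρ0 hρk
      have hsub : Metric.closedBall y ρ ∩ C ⊆ Metric.closedBall (x k) (β ^ k * ρ₀) := by
        rintro z ⟨hz1, hz2⟩
        rw [hC] at hz2
        obtain ⟨x', hplay', hz3⟩ := hz2
        have hd : dist (x k) (x' k) < 3 * (β ^ k * ρ₀) := by
          have h4 : dist (x k) (x' k) ≤ dist (x k) y + dist y z + dist z (x' k) :=
            dist_triangle4 _ _ _ _
          have h5 : dist (x k) y ≤ β ^ k * ρ₀ := by rw [dist_comm]; exact hyxd k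
          have h6 : dist y z ≤ ρ := Metric.mem_closedBall'.1 hz1
          have h7 : dist z (x' k) ≤ β ^ k * ρ₀ := Metric.mem_closedBall.1 (hz3 k)
          linarith
        have hxx' := gameHist_eq_apply (hsepall k x x' hplay hplay' hd)
        rw [Metric.mem_closedBall, hxx']
        exact Metric.mem_closedBall.1 (hz3 k)
      calc μ (Metric.closedBall y ρ)
          ≤ μ (Metric.closedBall y ρ ∩ C) + μ (Metric.closedBall y ρ \ C) :=
            measure_le_inter_add_diff _ _ _
        _ ≤ μ (Metric.closedBall (x k) (β ^ k * ρ₀)) + μ Cᶜ :=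
            add_le_add (measure_mono hsub) (measure_mono fun z hz => hz.2)
        _ = (P k)⁻¹ := by rw [hμsupp, add_zero, hμk k]
    have factB : ∀ (k : ℕ) (ρ : ℝ), 2 * (β ^ k * ρ₀) ≤ ρ →
        (P k)⁻¹ ≤ μ (Metric.closedBall y ρ) := by
      intro k ρ h2
      rw [← hμk k]
      refine measure_mono fun z hz => ?_
      rw [Metric.mem_closedBall] at hz ⊢
      have h8 : dist z y ≤ dist z (x k) + dist (x k) y := dist_triangle _ _ _
      rw [dist_comm (x k) y] at h8
      have := hyxd k
      linarith
    have factC : ∀ ρ : ℝ, 0 < ρ → 0 < μ (Metric.closedBall y ρ) := by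
      intro ρ hρ0
      obtain ⟨k, hk⟩ := (htend.eventually_lt_const (half_pos hρ0)).exists
      refine lt_of_lt_of_le ?_ (factB k ρ (by linarith))
      exact ENNReal.inv_pos.2 (hPtop k)
    have hsum : ∀ k : ℕ,
        (∑ i ∈ Finset.range (k + 1), Real.log ((σ (gameHist x i)).card) / c) = S k / c := by
      intro k
      rw [hSdef]
      exact (Finset.sum_div _ _ _).symm
    refine ⟨?_, factC⟩
    apply liminf_ge_aux
    · intro b hbδ
      by_cases hb0 : b ≤ 0
      · filter_upwards [Ioo_mem_nhdsGT_of_mem (Set.left_mem_Ico.2 one_pos)] with ρ hρmem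
        obtain ⟨hρ0, hρ1⟩ := hρmem
        have hm1 : (μ (Metric.closedBall y ρ)).toReal ≤ 1 :=
          ENNReal.toReal_mono ENNReal.one_ne_top prob_le_one
        have hnum : Real.log (μ (Metric.closedBall y ρ)).toReal ≤ 0 :=
          Real.log_nonpos ENNReal.toReal_nonneg hm1
        have hden : Real.log ρ < 0 := Real.log_neg hρ0 hρ1
        have hnn : 0 ≤ Real.log (μ (Metric.closedBall y ρ)).toReal / Real.log ρ := by
          rw [← neg_div_neg_eq]
          exact div_nonneg (by linarith) (by linarith)
        linarith
      · push_neg at hb0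
        have hδpos : 0 < δ := hb0.trans hbδ
        obtain ⟨hg1, -⟩ := of_liminf_ge hδpos (hscore x hplay)
        set b' := (b + δ) / 2 with hb'
        have hbb' : b < b' := by rw [hb']; linarith
        have hb'δ : b' < δ := by rw [hb']; linarith
        obtain ⟨K₁, hK₁⟩ := eventually_atTop.1 ((hg1 b' hb'δ).and (eventually_ge_atTop 1))
        have hSk : ∀ k, K₁ ≤ k → b' * ((k:ℝ) * c) ≤ S k := by
          intro k hk
          obtain ⟨hgk, hk1⟩ := hK₁ k hk
          have hkpos : (0:ℝ) < (k:ℝ) := by exact_mod_cast hk1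
          rw [hsum k] at hgk
          have heq : (1/(k:ℝ)) * (S k / c) = S k / ((k:ℝ) * c) := by
            field_simp
          rw [heq] at hgk
          exact (le_div_iff₀ (by positivity)).1 hgk
        obtain ⟨K₂, hK₂⟩ := exists_nat_ge ((b * (c - Real.log ρ₀)) / ((b' - b) * c))
        set K := max K₁ K₂ with hKdef
        have hε : 0 < min (β ^ K * ρ₀) 1 := lt_min (hpowpos K) one_pos
        filter_upwards [Ioo_mem_nhdsGT_of_mem (Set.left_mem_Ico.2 hε)] with ρ hρmem
        obtain ⟨hρ0, hρlt⟩ := hρmem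
        have hρK : ρ < β ^ K * ρ₀ := hρlt.trans_le (min_le_left _ _)
        have hρ1 : ρ < 1 := hρlt.trans_le (min_le_right _ _)
        have hρρ₀ : ρ < ρ₀ := by
          have hβK : β ^ K ≤ 1 := pow_le_one₀ hβ0.le hβ1.le
          nlinarith
        obtain ⟨k, hk1, hk2⟩ := exists_step hβ0 hβ1 hρ hρ0 hρρ₀
        have hkK : K ≤ k := by
          by_contra hlt
          push_neg at hlt
          have hpw : β ^ K * ρ₀ ≤ β ^ (k+1) * ρ₀ := by
            apply mul_le_mul_of_nonneg_right _ hρ.le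
            exact pow_le_pow_of_le_one hβ0.le hβ1.le hlt
          linarith
        have hSkb := hSk k (le_trans (le_max_left _ _) hkK)
        have hkq : b * (c - Real.log ρ₀) ≤ (k:ℝ) * ((b' - b) * c) := by
          have hq2 : (K₂:ℝ) ≤ (k:ℝ) := by
            exact_mod_cast le_trans (le_max_right _ _) hkK
          have hpos' : (0:ℝ) < (b' - b) * c := mul_pos (by linarith) hc
          exact (div_le_iff₀ hpos').1 (hK₂.trans hq2)
        have hμρ0 : 0 < μ (Metric.closedBall y ρ) := factC ρ hρ0
        have hm0 : 0 < (μ (Metric.closedBall y ρ)).toReal :=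
          ENNReal.toReal_pos hμρ0.ne' (measure_ne_top μ _)
        have hmA : (μ (Metric.closedBall y ρ)).toReal ≤ ((P k)⁻¹).toReal :=
          ENNReal.toReal_mono (ENNReal.inv_ne_top.2 (hPne0 k)) (factA k ρ hρ0 hk2)
        have hlogm : Real.log (μ (Metric.closedBall y ρ)).toReal ≤ -(S k) := by
          calc Real.log (μ (Metric.closedBall y ρ)).toReal
              ≤ Real.log ((P k)⁻¹).toReal := Real.log_le_log hm0 hmA
            _ = -(S k) := hPlog k
        have hlogρneg : Real.log ρ < 0 := Real.log_neg hρ0 hρ1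
        have hlb : -Real.log ρ ≤ ((k:ℝ)+1) * c - Real.log ρ₀ := by
          have h9 : Real.log (β ^ (k+1) * ρ₀) ≤ Real.log ρ :=
            Real.log_le_log (hpowpos (k+1)) hk1
          rw [Real.log_mul (pow_ne_zero _ hβ0.ne') hρ.ne', Real.log_pow, hcβ] at h9
          push_cast at h9
          linarith
        rw [← neg_div_neg_eq, le_div_iff₀ (neg_pos.2 hlogρneg)]
        have h10 : b * (-Real.log ρ) ≤ b * (((k:ℝ)+1) * c - Real.log ρ₀) :=
          mul_le_mul_of_nonneg_left hlb hb0.le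
        linarith [hSkb, hkq, hlogm, h10]
    · by_cases hδ0 : δ ≤ 0
      · exact Or.inl hδ0
      · right
        push_neg at hδ0
        obtain ⟨-, M, hM⟩ := of_liminf_ge hδ0 (hscore x hplay)
        set M' := max M 0 with hM'def
        have hM'0 : 0 ≤ M' := le_max_right _ _
        refine ⟨2 * M', ?_⟩
        have htend2 : Tendsto (fun k : ℕ => β ^ k * (2 * ρ₀)) atTop (𝓝 0) := by
          simpa using (tendsto_pow_atTop_nhds_zero_of_lt_one hβ0.le hβ1).mul_const (2*ρ₀)
        have e1 : ∀ᶠ k : ℕ in atTop, 1 ≤ k := eventually_ge_atTop 1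
        have e3 : ∀ᶠ k : ℕ in atTop, Real.log (2*ρ₀) ≤ (k:ℝ) * c / 2 := by
          have ht3 : Tendsto (fun k : ℕ => (k:ℝ) * (c/2)) atTop atTop :=
            Tendsto.atTop_mul_const (half_pos hc) tendsto_natCast_atTop_atTop
          have := ht3.eventually_ge_atTop (Real.log (2*ρ₀))
          filter_upwards [this] with k hk
          calc Real.log (2*ρ₀) ≤ (k:ℝ) * (c/2) := hk
            _ = (k:ℝ) * c / 2 := by ring
        have hfreq := hM.and_eventually (e1.and e3)
        have htendsub : Tendsto (fun k : ℕ => β ^ k * (2 * ρ₀)) atTop (𝓝[>] (0:ℝ)) :=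
          tendsto_nhdsWithin_of_tendsto_nhds_of_eventually_within _ htend2
            (Eventually.of_forall fun k => by
              simp only [Set.mem_Ioi]; positivity)
        apply htendsub.frequently
        refine hfreq.mono ?_
        rintro k ⟨hgk, hk1, hk3⟩
        have hkR : (1:ℝ) ≤ (k:ℝ) := by exact_mod_cast hk1
        have hkc : 0 < (k:ℝ) * c := mul_pos (by linarith) hc
        have hρ0' : (0:ℝ) < β ^ k * (2 * ρ₀) := by positivity
        have hmB : ((P k)⁻¹).toReal ≤ (μ (Metric.closedBall y (β ^ k * (2 * ρ₀)))).toReal :=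
          ENNReal.toReal_mono (measure_ne_top μ _) (factB k _ (le_of_eq (by ring)))
        have hlogm : -(S k) ≤ Real.log (μ (Metric.closedBall y (β ^ k * (2 * ρ₀)))).toReal := by
          rw [← hPlog k]
          exact Real.log_le_log (hPinvpos k) hmB
        have hlogρ : Real.log (β ^ k * (2 * ρ₀)) = (k:ℝ) * (-c) + Real.log (2*ρ₀) := by
          rw [Real.log_mul (pow_ne_zero _ hβ0.ne') (by positivity), Real.log_pow, hcβ]
        have hnlρ : (k:ℝ) * c / 2 ≤ -Real.log (β ^ k * (2 * ρ₀)) := by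
          rw [hlogρ]; linarith
        have hnlρpos : 0 < -Real.log (β ^ k * (2 * ρ₀)) :=
          lt_of_lt_of_le (by positivity) hnlρ
        have hSM : S k ≤ M' * ((k:ℝ) * c) := by
          rw [hsum k] at hgk
          have heq : (1/(k:ℝ)) * (S k / c) = S k / ((k:ℝ) * c) := by field_simp
          rw [heq] at hgk
          have h11 : S k ≤ M * ((k:ℝ) * c) := (div_le_iff₀ hkc).1 hgk
          have : M * ((k:ℝ) * c) ≤ M' * ((k:ℝ) * c) :=
            mul_le_mul_of_nonneg_right (le_max_left _ _) hkc.le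
          linarith
        rw [← neg_div_neg_eq, div_le_iff₀ hnlρpos]
        calc -Real.log (μ (Metric.closedBall y (β ^ k * (2 * ρ₀)))).toReal
            ≤ S k := by linarith [hlogm]
          _ ≤ M' * ((k:ℝ) * c) := hSM
          _ = 2 * M' * ((k:ℝ) * c / 2) := by ring
          _ ≤ 2 * M' * -Real.log (β ^ k * (2 * ρ₀)) :=
              mul_le_mul_of_nonneg_left hnlρ (by linarith)
  refine ⟨fun y hy => (key y hy).1, ?_⟩
  by_cases hδ0 : δ ≤ 0
  · rw [ENNReal.ofReal_of_nonpos hδ0]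
    exact zero_le
  · push_neg at hδ0
    by_contra hdim
    push_neg at hdim
    have hfin : dimH C ≠ ∞ := (hdim.trans ENNReal.ofReal_lt_top).ne
    have htR : (dimH C).toReal < δ := (ENNReal.lt_ofReal_iff_toReal_lt hfin).1 hdim
    set dr : ℝ := ((dimH C).toReal + δ) / 2 with hdr
    have htR0 : 0 ≤ (dimH C).toReal := ENNReal.toReal_nonneg
    have hdr0 : 0 < dr := by rw [hdr]; linarith
    have hdrδ : dr < δ := by rw [hdr]; linarith
    have hdrgt : (dimH C).toReal < dr := by rw [hdr]; linarith
    set Cm : ℕ → Set (EuclideanSpace ℝ (Fin D)) := fun m =>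
      {y | y ∈ C ∧ ∀ ρ : ℝ, 0 < ρ → ρ ≤ 1 / ((m:ℝ) + 1) →
        μ (Metric.closedBall y ρ) ≤ ENNReal.ofReal (ρ ^ dr)} with hCm
    have hmono : Monotone Cm := by
      intro m m' hmm' y hy
      refine ⟨hy.1, fun ρ hρ0 hρle => hy.2 ρ hρ0 (hρle.trans ?_)⟩
      apply one_div_le_one_div_of_le (by positivity)
      have : (m:ℝ) ≤ (m':ℝ) := by exact_mod_cast hmm'
      linarith
    have hunion : C = ⋃ m, Cm m := by
      apply Set.Subset.antisymm
      · intro y hy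
        have h1 := (key y hy).1
        have h2 := (key y hy).2
        have hev := (of_liminf_ge hδ0 h1).1 dr hdrδ
        rw [eventually_nhdsWithin_iff, Metric.eventually_nhds_iff] at hev
        obtain ⟨ε, hε0, hev⟩ := hev
        obtain ⟨m, hm⟩ := exists_nat_one_div_lt (lt_min hε0 one_pos)
        refine Set.mem_iUnion.2 ⟨m, hy, fun ρ hρ0 hρle => ?_⟩
        have hm' : 1 / ((m:ℝ) + 1) < min ε 1 := hm
        have hρε : dist ρ (0:ℝ) < ε := by
          rw [Real.dist_eq, sub_zero, abs_of_pos hρ0]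
          exact lt_of_le_of_lt hρle (lt_of_lt_of_le hm' (min_le_left _ _))
        have hρ1 : ρ < 1 := lt_of_le_of_lt hρle (lt_of_lt_of_le hm' (min_le_right _ _))
        have hf := hev hρε hρ0
        have hlogρ : Real.log ρ < 0 := Real.log_neg hρ0 hρ1
        have hm0 : 0 < (μ (Metric.closedBall y ρ)).toReal :=
          ENNReal.toReal_pos (h2 ρ hρ0).ne' (measure_ne_top μ _)
        have hle : Real.log (μ (Metric.closedBall y ρ)).toReal ≤ dr * Real.log ρ :=
          (le_div_iff_of_neg hlogρ).1 hf
        have hmle : (μ (Metric.closedBall y ρ)).toReal ≤ ρ ^ dr := by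
          rw [← Real.exp_log hm0, Real.rpow_def_of_pos hρ0]
          exact Real.exp_le_exp.2 (by rw [mul_comm]; exact hle)
        calc μ (Metric.closedBall y ρ)
            = ENNReal.ofReal (μ (Metric.closedBall y ρ)).toReal :=
              (ENNReal.ofReal_toReal (measure_ne_top μ _)).symm
          _ ≤ ENNReal.ofReal (ρ ^ dr) := ENNReal.ofReal_le_ofReal hmle
      · exact Set.iUnion_subset fun m y hy => hy.1
    have hμC : 1 ≤ μ C := by
      have h := measure_union_le (μ := μ) C Cᶜ
      rw [Set.union_compl_self, measure_univ, hμsupp, add_zero] at h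
      exact h
    have hsup : ∃ m, μ (Cm m) ≠ 0 := by
      by_contra hno
      push_neg at hno
      have hμC0 : μ C = 0 := by
        rw [hunion, hmono.measure_iUnion]
        simp [hno]
      rw [hμC0] at hμC
      simp at hμC
    obtain ⟨m, hm0'⟩ := hsup
    have hbound : ∀ (t : ℕ → Set (EuclideanSpace ℝ (Fin D))),
        (∀ n, EMetric.diam (t n) ≤ ENNReal.ofReal (1 / ((m:ℝ) + 1))) →
        ∀ n, μ (t n ∩ Cm m) ≤ ⨆ _ : (t n).Nonempty, EMetric.diam (t n) ^ dr := by
      intro t hdiam n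
      rcases Set.eq_empty_or_nonempty (t n ∩ Cm m) with hemp | ⟨z, hzt, hzC⟩
      · rw [hemp, measure_empty]; exact zero_le
      · have hnon : (t n).Nonempty := ⟨z, hzt⟩
        rw [iSup_pos hnon]
        have hdfin : EMetric.diam (t n) ≠ ∞ := ((hdiam n).trans_lt ENNReal.ofReal_lt_top).ne
        have hbd : Bornology.IsBounded (t n) := Metric.isBounded_iff_ediam_ne_top.2 hdfin
        have hRle : Metric.diam (t n) ≤ 1 / ((m:ℝ) + 1) := by
          have h13 := ENNReal.toReal_mono ENNReal.ofReal_ne_top (hdiam n)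
          rwa [ENNReal.toReal_ofReal (by positivity)] at h13
        have hsub : t n ∩ Cm m ⊆ Metric.closedBall z (Metric.diam (t n)) := fun w hw =>
          Metric.mem_closedBall.2 (Metric.dist_le_diam_of_mem hbd hw.1 hzt)
        have hediam : ENNReal.ofReal (Metric.diam (t n)) = EMetric.diam (t n) :=
          ENNReal.ofReal_toReal hdfin
        rcases lt_or_eq_of_le (Metric.diam_nonneg (s := t n)) with hR0 | hR0
        · calc μ (t n ∩ Cm m) ≤ μ (Metric.closedBall z (Metric.diam (t n))) :=
                measure_mono hsub
            _ ≤ ENNReal.ofReal ((Metric.diam (t n)) ^ dr) := hzC.2 _ hR0 hRle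
            _ = ENNReal.ofReal (Metric.diam (t n)) ^ dr := (ENNReal.ofReal_rpow_of_pos hR0).symm
            _ = EMetric.diam (t n) ^ dr := by rw [hediam]
        · have hzero : EMetric.diam (t n) = 0 := by
            rw [← hediam, ← hR0, ENNReal.ofReal_zero]
          rw [hzero, ENNReal.zero_rpow_of_pos hdr0]
          have hlim : Tendsto (fun ρ' : ℝ => ENNReal.ofReal (ρ' ^ dr))
              (𝓝[>] (0:ℝ)) (𝓝 0) := by
            have h14 : Tendsto (fun ρ' : ℝ => ρ' ^ dr) (𝓝[>] (0:ℝ)) (𝓝 0) := by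
              have := (Real.continuousAt_rpow_const 0 dr (Or.inr hdr0.le)).continuousWithinAt
                (s := Set.Ioi (0:ℝ))
              simpa [ContinuousWithinAt, Real.zero_rpow hdr0.ne'] using this
            have := (ENNReal.continuous_ofReal.tendsto 0).comp h14
            rwa [ENNReal.ofReal_zero] at this
          refine ge_of_tendsto hlim ?_
          filter_upwards [Ioc_mem_nhdsGT (by positivity : (0:ℝ) < 1 / ((m:ℝ) + 1))]
            with ρ' hρ'
          obtain ⟨hρ'0, hρ'le⟩ := hρ'
          have hsub2 : t n ∩ Cm m ⊆ Metric.closedBall z ρ' := by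
            refine hsub.trans (Metric.closedBall_subset_closedBall ?_)
            rw [← hR0]
            exact hρ'0.le
          exact le_trans (measure_mono hsub2) (hzC.2 ρ' hρ'0 hρ'le)
    have hmass : μ (Cm m) ≤ μH[dr] (Cm m) := by
      rw [Measure.hausdorffMeasure_apply]
      refine le_iSup₂_of_le (ENNReal.ofReal (1 / ((m:ℝ) + 1)))
        (ENNReal.ofReal_pos.2 (by positivity)) ?_
      refine le_iInf fun t => le_iInf fun hcov => le_iInf fun hdiam => ?_
      calc μ (Cm m) ≤ μ (⋃ n, t n ∩ Cm m) := by
            refine measure_mono fun z hz => ?_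
            obtain ⟨n, hn⟩ := Set.mem_iUnion.1 (hcov hz)
            exact Set.mem_iUnion.2 ⟨n, hn, hz⟩
        _ ≤ ∑' n, μ (t n ∩ Cm m) := measure_iUnion_le _
        _ ≤ ∑' n, ⨆ _ : (t n).Nonempty, EMetric.diam (t n) ^ dr :=
            ENNReal.tsum_le_tsum (hbound t hdiam)
    have hCmC : Cm m ⊆ C := fun y hy => hy.1
    have hHne : μH[dr] C ≠ 0 := by
      intro h0
      apply hm0'
      have h15 : μH[dr] (Cm m) = 0 :=
        le_antisymm (h0 ▸ measure_mono hCmC) zero_le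
      exact le_antisymm (hmass.trans h15.le) zero_le
    have hHne' : μH[((⟨dr, hdr0.le⟩ : ℝ≥0) : ℝ)] C ≠ 0 := hHne
    have hdle := le_dimH_of_hausdorffMeasure_ne_zero hHne'
    have h17 := ENNReal.toReal_mono hfin hdle
    change dr ≤ _ at h17
    have h18 : dr ≤ (dimH C).toReal := h17
    linarith
end
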